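/- arXiv:2104.07121 — 6 statements merged into one kernel-verified Lean document; each statement's English description precedes it below -/
import Mathlib

section
/- Let G be a graph and fix a vertex P of G. The functional Weierstrass set H_f(P) is an additive submonoid of ℕ (it contains 0 and is closed under addition). Moreover, if G is a simple graph, then H_f(P) is a numerical semigroup (i.e., its complement in ℕ is finite). -/
open scoped Classical

/-- A graph: a finite connected multigraph with no loop edges, given by a symmetric
edge-multiplicity function on a finite nonempty vertex type. -/
structure Multigraph where
  V : Type
  [fintypeV : Fintype V]
  [decEqV : DecidableEq V]
  [nonemptyV : Nonempty V]
  adj : V → V → ℕ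
  adj_symm : ∀ u v, adj u v = adj v u
  adj_loopless : ∀ v, adj v v = 0
  conn : ∀ u v, Relation.ReflTransGen (fun a b => adj a b ≠ 0) u v

attribute [instance] Multigraph.fintypeV Multigraph.decEqV Multigraph.nonemptyV

namespace Multigraph

variable (G : Multigraph)

/-- A simple graph: no multiple edges and more than one vertex. -/
def Simple : Prop :=
  (∀ u v, G.adj u v ≤ 1) ∧ 1 < Fintype.card G.V

/-- The degree of a divisor. -/
def deg (D : G.V → ℤ) : ℤ := ∑ v, D v

/-- A divisor is effective if all its coefficients are nonnegative. -/
def Effective (D : G.V → ℤ) : Prop := ∀ v, 0 ≤ D v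

/-- The Laplacian of an integer-valued function on the vertices. -/
def lap (f : G.V → ℤ) : G.V → ℤ := fun v => ∑ w, (G.adj v w : ℤ) * (f v - f w)

/-- The linear system `|D|` is nonempty, i.e. `D` is linearly equivalent to an
effective divisor. -/
def LinNonempty (D : G.V → ℤ) : Prop :=
  ∃ f : G.V → ℤ, G.Effective (D - G.lap f)

/-- The Baker–Norine rank of a divisor: `-1` if `|D| = ∅`, otherwise the maximal
`k` such that `|D - E| ≠ ∅` for every effective divisor `E` of degree `k`. -/
noncomputable def rank (D : G.V → ℤ) : ℤ :=
  if G.LinNonempty D then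
    ((sSup {k : ℕ | ∀ E : G.V → ℤ, G.Effective E → G.deg E = (k : ℤ) →
        G.LinNonempty (D - E)} : ℕ) : ℤ)
  else -1

/-- The divisor `n • P`. -/
def pt (P : G.V) (n : ℤ) : G.V → ℤ := fun v => if v = P then n else 0

/-- The rank Weierstrass set of `G` at `P`. -/
def Hr (P : G.V) : Set ℕ :=
  {n : ℕ | G.rank (G.pt P ((n : ℤ) - 1)) < G.rank (G.pt P (n : ℤ))}

/-- The functional Weierstrass set of `G` at `P`: pole orders at `P` of functions
with a unique pole at `P`. -/
def Hf (P : G.V) : Set ℕ :=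
  {n : ℕ | ∃ f : G.V → ℤ, G.lap f P = -(n : ℤ) ∧ ∀ Q, Q ≠ P → 0 ≤ G.lap f Q}

/-- The number of edges joining `Q` to vertices outside `A`. -/
def outdeg (A : Finset G.V) (Q : G.V) : ℕ := ∑ R ∈ Aᶜ, G.adj Q R

/-- A divisor is `P`-reduced. -/
def Reduced (P : G.V) (D : G.V → ℤ) : Prop :=
  (∀ Q, Q ≠ P → 0 ≤ D Q) ∧
  ∀ A : Finset G.V, A.Nonempty → P ∉ A → ∃ Q ∈ A, D Q < (G.outdeg A Q : ℤ)

/-- `G` is the graph `B_n` with two vertices joined by `n` parallel edges. -/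
def IsBanana (n : ℕ) : Prop :=
  Fintype.card G.V = 2 ∧ ∀ u v, u ≠ v → G.adj u v = n

/-- `G` is the complete graph on `n` vertices. -/
def IsComplete (n : ℕ) : Prop :=
  Fintype.card G.V = n ∧ ∀ u v, u ≠ v → G.adj u v = 1

/-- `G` is the complete bipartite graph with parts `A` (of size `m`) and its
complement (of size `n`). -/
def IsCompleteBipartite (A : Finset G.V) (m n : ℕ) : Prop :=
  A.card = m ∧ Aᶜ.card = n ∧
  ∀ u v, G.adj u v = if (u ∈ A ∧ v ∉ A) ∨ (u ∉ A ∧ v ∈ A) then 1 else 0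

/-- `λ_Q(k)`: the least `n` with `r(nQ) = k`. -/
noncomputable def lam (Q : G.V) (k : ℕ) : ℕ :=
  sInf {n : ℕ | G.rank (G.pt Q (n : ℤ)) = (k : ℤ)}

end Multigraph

/-- `G` is the vertex gluing of `G₁` and `G₂` identifying `P₁` and `P₂` into `P`. -/
def IsVertexGluing (G G₁ G₂ : Multigraph) (P : G.V) (P₁ : G₁.V) (P₂ : G₂.V) : Prop :=
  ∃ (ι₁ : G₁.V → G.V) (ι₂ : G₂.V → G.V),
    Function.Injective ι₁ ∧ Function.Injective ι₂ ∧
    ι₁ P₁ = P ∧ ι₂ P₂ = P ∧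
    (∀ a b, ι₁ a = ι₂ b → ι₁ a = P) ∧
    (∀ v : G.V, (∃ a, ι₁ a = v) ∨ (∃ b, ι₂ b = v)) ∧
    (∀ a b, G.adj (ι₁ a) (ι₁ b) = G₁.adj a b) ∧
    (∀ a b, G.adj (ι₂ a) (ι₂ b) = G₂.adj a b) ∧
    (∀ a b, ι₁ a ≠ P → ι₂ b ≠ P → G.adj (ι₁ a) (ι₂ b) = 0)

lemma Multigraph.lap_add (G : Multigraph) (f g : G.V → ℤ) (v : G.V) :
    G.lap (f + g) v = G.lap f v + G.lap g v := by
  simp only [Multigraph.lap, Pi.add_apply]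
  rw [← Finset.sum_add_distrib]
  exact Finset.sum_congr rfl fun w _ => by ring

/-- Laplacian of the two-point supported function. -/
lemma Multigraph.lap_two (G : Multigraph) (P Q : G.V) (a b : ℤ) (v : G.V) :
    G.lap (fun w => (if w = P then -a else 0) + (if w = Q then -b else 0)) v =
      ((if v = P then -a else 0) + (if v = Q then -b else 0)) * (∑ w, (G.adj v w : ℤ))
        + a * G.adj v P + b * G.adj v Q := by
  simp only [Multigraph.lap, mul_sub, Finset.sum_sub_distrib, ← Finset.sum_mul,
    mul_add, Finset.sum_add_distrib, mul_ite, mul_zero, mul_neg,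
    Finset.sum_ite_eq', Finset.mem_univ, if_true]
  split_ifs <;>
    simp only [Finset.sum_neg_distrib, ← Finset.sum_mul, mul_zero, neg_zero,
      Finset.sum_const_zero] <;> ring

/-- The functional Weierstrass set is an additive submonoid of `ℕ`; on a simple
graph it is a numerical semigroup (its complement is finite). -/
theorem Hf_structure (G : Multigraph) (P : G.V) :
    0 ∈ G.Hf P ∧ (∀ a ∈ G.Hf P, ∀ b ∈ G.Hf P, a + b ∈ G.Hf P) ∧
      (G.Simple → (G.Hf P)ᶜ.Finite) := by
  refine ⟨⟨0, by simp [Multigraph.lap], fun Q _ => by simp [Multigraph.lap]⟩, ?_, ?_⟩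
  · rintro m ⟨f, hfP, hf⟩ n ⟨g, hgP, hg⟩
    refine ⟨f + g, ?_, fun Q hQ => ?_⟩
    · rw [G.lap_add, hfP, hgP]; push_cast; ring
    · rw [G.lap_add]; exact add_nonneg (hf Q hQ) (hg Q hQ)
  · rintro ⟨hsimple, hcard⟩
    -- P has a neighbor Q with adj P Q = 1
    obtain ⟨v, hv⟩ := Fintype.exists_ne_of_one_lt_card hcard P
    obtain hPv | ⟨Q, hPQ, -⟩ := (G.conn P v).cases_head
    · exact absurd hPv.symm hv
    have hadjPQ : G.adj P Q = 1 := le_antisymm (hsimple P Q) (Nat.one_le_iff_ne_zero.mpr hPQ)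
    have hQP : Q ≠ P := by
      intro h; rw [h, G.adj_loopless] at hadjPQ; exact one_ne_zero hadjPQ.symm
    set dP : ℕ := ∑ w, G.adj P w with hdP
    set dQ : ℕ := ∑ w, G.adj Q w with hdQ
    have hdPpos : 0 < dP := by
      have : G.adj P Q ≤ dP :=
        Finset.single_le_sum (f := fun w => G.adj P w) (fun _ _ => Nat.zero_le _)
          (Finset.mem_univ Q)
      omega
    have hdQle : dQ ≤ Fintype.card G.V := by
      calc dQ ≤ ∑ _w : G.V, 1 := Finset.sum_le_sum fun w _ => hsimple Q w
        _ = Fintype.card G.V := by simp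
    -- every n ≥ dP * dP * card is in Hf P
    have key : ∀ n : ℕ, dP * dP * Fintype.card G.V ≤ n → n ∈ G.Hf P := by
      intro n hn
      set a : ℕ := n / dP + 1 with ha
      set b : ℕ := dP - n % dP with hb
      have hab : a * dP = n + b := by
        have h1 : n % dP < dP := Nat.mod_lt _ hdPpos
        have h2 : dP * (n / dP) + n % dP = n := Nat.div_add_mod n dP
        have : a * dP = dP * (n / dP) + dP := by ring
        omega
      have hbd : b ≤ dP := Nat.sub_le _ _
      have hage : b * dQ ≤ a := by
        have h1 : dP * dP * Fintype.card G.V / dP ≤ n / dP := Nat.div_le_div_right hn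
        have h2 : dP * dP * Fintype.card G.V / dP = dP * Fintype.card G.V := by
          rw [mul_assoc, Nat.mul_div_cancel_left _ hdPpos]
        calc b * dQ ≤ dP * Fintype.card G.V :=
              Nat.mul_le_mul hbd hdQle
          _ ≤ n / dP := by omega
          _ ≤ a := Nat.le_succ_of_le (Nat.le_refl _)
      have hsumP : ∑ w, (G.adj P w : ℤ) = (dP : ℤ) := by rw [hdP]; push_cast; ring
      have hsumQ : ∑ w, (G.adj Q w : ℤ) = (dQ : ℤ) := by rw [hdQ]; push_cast; ring
      have habZ : (a : ℤ) * dP = (n : ℤ) + b := by exact_mod_cast hab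
      have hageZ : (b : ℤ) * dQ ≤ (a : ℤ) := by exact_mod_cast hage
      refine ⟨fun w => (if w = P then -(a : ℤ) else 0) + (if w = Q then -(b : ℤ) else 0),
        ?_, ?_⟩
      · rw [G.lap_two]
        rw [if_pos rfl, if_neg (fun h : P = Q => hQP h.symm), G.adj_loopless, hadjPQ,
          hsumP]
        push_cast
        linarith
      · intro R hR
        rw [G.lap_two]
        by_cases hRQ : R = Q
        · rw [if_neg hR, if_pos hRQ, hRQ, G.adj_loopless, G.adj_symm, hadjPQ, hsumQ]
          push_cast
          linarith
        · rw [if_neg hR, if_neg hRQ]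
          have h1 : (0:ℤ) ≤ (a : ℤ) * G.adj R P := by positivity
          have h2 : (0:ℤ) ≤ (b : ℤ) * G.adj R Q := by positivity
          linarith
    exact Set.Finite.subset (Set.finite_Iio (dP * dP * Fintype.card G.V))
      fun n hn => by
        simp only [Set.mem_compl_iff] at hn
        by_contra h
        exact hn (key n (le_of_not_gt (by simpa [Set.mem_Iio] using h)))
end

section
/- Let G_1 and G_2 be graphs, let P_1 ∈ V(G_1) and P_2 ∈ V(G_2), let G be the vertex gluing of G_1 and G_2 at P_1 and P_2, and let P ∈ V(G) be the identified vertex. Then the functional Weierstrass set of G at P is the sumset of the functional Weierstrass sets of the pieces: H_f^G(P) = H_f^{G_1}(P_1) + H_f^{G_2}(P_2) = { a + b : a ∈ H_f^{G_1}(P_1), b ∈ H_f^{G_2}(P_2) }. -/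
open scoped Classical

lemma lap_sum_zero (H : Multigraph) (f : H.V → ℤ) : ∑ v, H.lap f v = 0 := by
  unfold Multigraph.lap
  have h1 : ∑ v, ∑ w, (H.adj v w : ℤ) * (f v - f w)
      = (∑ v, ∑ w, (H.adj v w : ℤ) * f v) - ∑ v, ∑ w, (H.adj v w : ℤ) * f w := by
    rw [← Finset.sum_sub_distrib]
    refine Finset.sum_congr rfl fun v _ => ?_
    rw [← Finset.sum_sub_distrib]
    refine Finset.sum_congr rfl fun w _ => by ring
  rw [h1, Finset.sum_comm (f := fun v w => (H.adj v w : ℤ) * f w)]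
  have h2 : ∑ w, ∑ v, (H.adj v w : ℤ) * f w = ∑ w, ∑ v, (H.adj w v : ℤ) * f w :=
    Finset.sum_congr rfl fun w _ => Finset.sum_congr rfl fun v _ => by rw [H.adj_symm]
  rw [h2, sub_self]

lemma lap_nonpos (H : Multigraph) (f : H.V → ℤ) (P : H.V)
    (hf : ∀ Q, Q ≠ P → 0 ≤ H.lap f Q) : H.lap f P ≤ 0 := by
  have h0 := lap_sum_zero H f
  rw [← Finset.add_sum_erase _ _ (Finset.mem_univ P)] at h0
  have : 0 ≤ ∑ v ∈ Finset.univ.erase P, H.lap f v :=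
    Finset.sum_nonneg fun v hv => hf v (Finset.ne_of_mem_erase hv)
  linarith

lemma lap_shift (H : Multigraph) (f : H.V → ℤ) (c : ℤ) :
    H.lap (fun v => f v - c) = H.lap f := by
  funext v
  unfold Multigraph.lap
  exact Finset.sum_congr rfl fun w _ => by ring

/-- The functional Weierstrass set of a vertex gluing is the sumset of the
functional Weierstrass sets of the pieces. -/
theorem Hf_vertexGluing (G G₁ G₂ : Multigraph) (P : G.V) (P₁ : G₁.V) (P₂ : G₂.V)
    (h : IsVertexGluing G G₁ G₂ P P₁ P₂) :
    G.Hf P = {x : ℕ | ∃ a ∈ G₁.Hf P₁, ∃ b ∈ G₂.Hf P₂, x = a + b} := by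
  obtain ⟨ι₁, ι₂, inj₁, inj₂, hP₁, hP₂, hcap, hcov, hadj₁, hadj₂, hadj0⟩ := h
  -- splitting of sums over the vertices of G
  have hU : (Finset.univ.image ι₁) ∪ (Finset.univ.image ι₂) = (Finset.univ : Finset G.V) := by
    ext v
    simp only [Finset.mem_union, Finset.mem_image, Finset.mem_univ, true_and, iff_true]
    rcases hcov v with ⟨a, ha⟩ | ⟨b, hb⟩
    · exact Or.inl ⟨a, ha⟩
    · exact Or.inr ⟨b, hb⟩
  have hI : (Finset.univ.image ι₁) ∩ (Finset.univ.image ι₂) = {P} := by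
    ext v
    simp only [Finset.mem_inter, Finset.mem_image, Finset.mem_univ, true_and,
      Finset.mem_singleton]
    constructor
    · rintro ⟨⟨a, ha⟩, ⟨b, hb⟩⟩
      have := hcap a b (ha.trans hb.symm)
      rw [← ha]; exact this
    · rintro rfl
      exact ⟨⟨P₁, hP₁⟩, ⟨P₂, hP₂⟩⟩
  have hsplit : ∀ g : G.V → ℤ,
      ∑ v, g v = (∑ a, g (ι₁ a) + ∑ b, g (ι₂ b)) - g P := by
    intro g
    have := Finset.sum_union_inter (s₁ := Finset.univ.image ι₁) (s₂ := Finset.univ.image ι₂)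
      (f := g)
    rw [hU, hI, Finset.sum_singleton,
      Finset.sum_image (fun a _ b _ hab => inj₁ hab),
      Finset.sum_image (fun a _ b _ hab => inj₂ hab)] at this
    linarith
  -- ι₂ c = P ↔ c = P₂, etc.
  have h2P : ∀ c, ι₂ c = P → c = P₂ := fun c hc => inj₂ (hc.trans hP₂.symm)
  have h1P : ∀ c, ι₁ c = P → c = P₁ := fun c hc => inj₁ (hc.trans hP₁.symm)
  -- Laplacian away from P, side 1
  have hlap1 : ∀ (f : G.V → ℤ) (a), ι₁ a ≠ P → G.lap f (ι₁ a) = G₁.lap (f ∘ ι₁) a := by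
    intro f a ha
    have hs := hsplit (fun w => (G.adj (ι₁ a) w : ℤ) * (f (ι₁ a) - f w))
    have hsecond : ∑ c, (G.adj (ι₁ a) (ι₂ c) : ℤ) * (f (ι₁ a) - f (ι₂ c))
        = (G.adj (ι₁ a) P : ℤ) * (f (ι₁ a) - f P) := by
      rw [Finset.sum_eq_single P₂]
      · rw [hP₂]
      · intro c _ hc
        have hcP : ι₂ c ≠ P := fun hcc => hc (h2P c hcc)
        rw [hadj0 a c ha hcP]
        simp
      · intro hh; exact absurd (Finset.mem_univ P₂) hh
    have hfirst : ∑ b, (G.adj (ι₁ a) (ι₁ b) : ℤ) * (f (ι₁ a) - f (ι₁ b))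
        = G₁.lap (f ∘ ι₁) a := by
      unfold Multigraph.lap
      exact Finset.sum_congr rfl fun b _ => by rw [hadj₁]; rfl
    have hd : G.lap f (ι₁ a) = ∑ w, (G.adj (ι₁ a) w : ℤ) * (f (ι₁ a) - f w) := rfl
    rw [hd, hs, hsecond, ← hfirst]
    ring
  have hlap2 : ∀ (f : G.V → ℤ) (a), ι₂ a ≠ P → G.lap f (ι₂ a) = G₂.lap (f ∘ ι₂) a := by
    intro f a ha
    have hs := hsplit (fun w => (G.adj (ι₂ a) w : ℤ) * (f (ι₂ a) - f w))
    have hsecond : ∑ c, (G.adj (ι₂ a) (ι₁ c) : ℤ) * (f (ι₂ a) - f (ι₁ c))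
        = (G.adj (ι₂ a) P : ℤ) * (f (ι₂ a) - f P) := by
      rw [Finset.sum_eq_single P₁]
      · rw [hP₁]
      · intro c _ hc
        have hcP : ι₁ c ≠ P := fun hcc => hc (h1P c hcc)
        rw [G.adj_symm, hadj0 c a hcP ha]
        simp
      · intro hh; exact absurd (Finset.mem_univ P₁) hh
    have hfirst : ∑ b, (G.adj (ι₂ a) (ι₂ b) : ℤ) * (f (ι₂ a) - f (ι₂ b))
        = G₂.lap (f ∘ ι₂) a := by
      unfold Multigraph.lap
      exact Finset.sum_congr rfl fun b _ => by rw [hadj₂]; rfl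
    have hd : G.lap f (ι₂ a) = ∑ w, (G.adj (ι₂ a) w : ℤ) * (f (ι₂ a) - f w) := rfl
    rw [hd, hs, hsecond, ← hfirst]
    ring
  have hlapP : ∀ f : G.V → ℤ, G.lap f P = G₁.lap (f ∘ ι₁) P₁ + G₂.lap (f ∘ ι₂) P₂ := by
    intro f
    have hs := hsplit (fun w => (G.adj P w : ℤ) * (f P - f w))
    have hfirst : ∑ a, (G.adj P (ι₁ a) : ℤ) * (f P - f (ι₁ a)) = G₁.lap (f ∘ ι₁) P₁ := by
      unfold Multigraph.lap
      refine Finset.sum_congr rfl fun b _ => ?_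
      rw [← hP₁, hadj₁]; rfl
    have hsecond : ∑ a, (G.adj P (ι₂ a) : ℤ) * (f P - f (ι₂ a)) = G₂.lap (f ∘ ι₂) P₂ := by
      unfold Multigraph.lap
      refine Finset.sum_congr rfl fun b _ => ?_
      rw [← hP₂, hadj₂]; rfl
    have hd : G.lap f P = ∑ w, (G.adj P w : ℤ) * (f P - f w) := rfl
    rw [hd, hs, hfirst, hsecond]
    simp [G.adj_loopless]
  ext n
  simp only [Multigraph.Hf, Set.mem_setOf_eq]
  constructor
  · rintro ⟨f, hfP, hfQ⟩
    -- restrict to the two sides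
    have hn1 : ∀ Q, Q ≠ P₁ → 0 ≤ G₁.lap (f ∘ ι₁) Q := by
      intro Q hQ
      have hne : ι₁ Q ≠ P := fun hh => hQ (h1P Q hh)
      rw [← hlap1 f Q hne]
      exact hfQ _ hne
    have hn2 : ∀ Q, Q ≠ P₂ → 0 ≤ G₂.lap (f ∘ ι₂) Q := by
      intro Q hQ
      have hne : ι₂ Q ≠ P := fun hh => hQ (h2P Q hh)
      rw [← hlap2 f Q hne]
      exact hfQ _ hne
    have hp1 : G₁.lap (f ∘ ι₁) P₁ ≤ 0 := lap_nonpos _ _ _ hn1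
    have hp2 : G₂.lap (f ∘ ι₂) P₂ ≤ 0 := lap_nonpos _ _ _ hn2
    refine ⟨(-(G₁.lap (f ∘ ι₁) P₁)).toNat, ⟨f ∘ ι₁, ?_, hn1⟩,
      (-(G₂.lap (f ∘ ι₂) P₂)).toNat, ⟨f ∘ ι₂, ?_, hn2⟩, ?_⟩
    · rw [Int.toNat_of_nonneg (by linarith)]; ring
    · rw [Int.toNat_of_nonneg (by linarith)]; ring
    · have := hlapP f
      rw [hfP] at this
      omega
  · rintro ⟨a, ⟨f₁, hf₁P, hf₁Q⟩, b, ⟨f₂, hf₂P, hf₂Q⟩, rfl⟩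
    classical
    refine ⟨fun v => if hv : ∃ x, ι₁ x = v then f₁ hv.choose - f₁ P₁
      else f₂ ((hcov v).resolve_left hv).choose - f₂ P₂, ?_, ?_⟩
    all_goals
      set f : G.V → ℤ := fun v => if hv : ∃ x, ι₁ x = v then f₁ hv.choose - f₁ P₁
        else f₂ ((hcov v).resolve_left hv).choose - f₂ P₂ with hfdef
    all_goals
      have hcomp1 : f ∘ ι₁ = fun x => f₁ x - f₁ P₁ := by
        funext x
        have hex : ∃ y, ι₁ y = ι₁ x := ⟨x, rfl⟩
        simp only [hfdef, Function.comp_apply, dif_pos hex]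
        rw [inj₁ hex.choose_spec]
      have hcomp2 : f ∘ ι₂ = fun x => f₂ x - f₂ P₂ := by
        funext x
        by_cases hex : ∃ y, ι₁ y = ι₂ x
        · have hPx : ι₂ x = P := by rw [← hcap _ _ hex.choose_spec, hex.choose_spec]
          have hx : x = P₂ := h2P x hPx
          subst hx
          have hch : hex.choose = P₁ := h1P _ (hex.choose_spec.trans hPx)
          simp only [hfdef, Function.comp_apply]
          rw [dif_pos hex, hch]
          simp
        · simp only [hfdef, Function.comp_apply, dif_neg hex]
          congr 1
          exact congrArg f₂ (inj₂ ((hcov (ι₂ x)).resolve_left hex).choose_spec)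
      have hL1 : G₁.lap (f ∘ ι₁) = G₁.lap f₁ := by rw [hcomp1, lap_shift]
      have hL2 : G₂.lap (f ∘ ι₂) = G₂.lap f₂ := by rw [hcomp2, lap_shift]
    · rw [hlapP f, hL1, hL2, hf₁P, hf₂P]
      push_cast
      ring
    · intro Q hQ
      rcases hcov Q with ⟨x, hx⟩ | ⟨x, hx⟩
      · have hxP : x ≠ P₁ := fun hh => hQ (by rw [← hx, hh, hP₁])
        rw [← hx, hlap1 f x (by rw [hx]; exact hQ), hL1]
        exact hf₁Q x hxP
      · have hxP : x ≠ P₂ := fun hh => hQ (by rw [← hx, hh, hP₂])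
        rw [← hx, hlap2 f x (by rw [hx]; exact hQ), hL2]
        exact hf₂Q x hxP
end

section
/- For every additive submonoid M of ℕ there exists a graph G and a vertex P ∈ V(G) such that the functional Weierstrass set of G at P equals M, i.e., H_f(P) = M. -/
open scoped Classical

section HfAux

/-- The one-vertex graph. -/
@[reducible] def unitGraph : Multigraph where
  V := Unit
  adj _ _ := 0
  adj_symm _ _ := rfl
  adj_loopless _ := rfl
  conn u v := by cases u; cases v; exact .refl

/-- Star adjacency: a center `none` joined to `some r` by `g r` edges. -/
def sadj {m : ℕ} (g : Fin m → ℕ) : Option (Fin m) → Option (Fin m) → ℕ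
  | none, some r => g r
  | some r, none => g r
  | _, _ => 0

@[simp] lemma sadj_none_none {m : ℕ} (g : Fin m → ℕ) : sadj g none none = 0 := rfl
@[simp] lemma sadj_none_some {m : ℕ} (g : Fin m → ℕ) (r : Fin m) :
    sadj g none (some r) = g r := rfl
@[simp] lemma sadj_some_none {m : ℕ} (g : Fin m → ℕ) (r : Fin m) :
    sadj g (some r) none = g r := rfl
@[simp] lemma sadj_some_some {m : ℕ} (g : Fin m → ℕ) (r s : Fin m) :
    sadj g (some r) (some s) = 0 := rfl

/-- The star multigraph with center `none` and `g r` edges to leaf `some r`. -/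
@[reducible] def starGraph (m : ℕ) (g : Fin m → ℕ) (hg : ∀ r, 0 < g r) : Multigraph where
  V := Option (Fin m)
  adj := sadj g
  adj_symm u v := by cases u <;> cases v <;> rfl
  adj_loopless v := by cases v <;> rfl
  conn := by
    have h : ∀ r : Fin m,
        Relation.ReflTransGen (fun a b => sadj g a b ≠ 0) (some r) none :=
      fun r => Relation.ReflTransGen.single (by simp [(hg r).ne'])
    rintro (_ | u) (_ | v)
    · exact .refl
    · exact .single (by simp [(hg v).ne'])
    · exact h u
    · exact (h u).trans (Relation.ReflTransGen.single (by simp [(hg v).ne']))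

@[simp] lemma starGraph_adj (m : ℕ) (g : Fin m → ℕ) (hg : ∀ r, 0 < g r) :
    (starGraph m g hg).adj = sadj g := rfl

lemma starGraph_lap_none (m : ℕ) (g : Fin m → ℕ) (hg : ∀ r, 0 < g r)
    (f : Option (Fin m) → ℤ) :
    (starGraph m g hg).lap f none = ∑ r : Fin m, (g r : ℤ) * (f none - f (some r)) := by
  show ∑ w : Option (Fin m), (sadj g none w : ℤ) * (f none - f w) = _
  rw [Fintype.sum_option]
  simp

lemma starGraph_lap_some (m : ℕ) (g : Fin m → ℕ) (hg : ∀ r, 0 < g r)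
    (f : Option (Fin m) → ℤ) (r : Fin m) :
    (starGraph m g hg).lap f (some r) = (g r : ℤ) * (f (some r) - f none) := by
  show ∑ w : Option (Fin m), (sadj g (some r) w : ℤ) * (f (some r) - f w) = _
  rw [Fintype.sum_option]
  simp

end HfAux

/-- Every additive submonoid of `ℕ` is the functional Weierstrass set of some
graph at some vertex. -/
theorem Hf_realizes_addSubmonoid (M : AddSubmonoid ℕ) :
    ∃ (G : Multigraph) (P : G.V), G.Hf P = (M : Set ℕ) := by
  by_cases htriv : ∀ n ∈ M, n = 0
  · -- trivial submonoid : one-vertex graph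
    refine ⟨unitGraph, (), ?_⟩
    ext n
    have hlap : ∀ f : Unit → ℤ, unitGraph.lap f () = 0 := by
      intro f; simp [Multigraph.lap, unitGraph]
    constructor
    · rintro ⟨f, h1, -⟩
      rw [hlap] at h1
      have : n = 0 := by omega
      simpa [this] using M.zero_mem
    · intro hn
      have : n = 0 := htriv n hn
      exact ⟨0, by simp [hlap, this], fun Q hQ => absurd rfl hQ⟩
  · push_neg at htriv
    obtain ⟨n₀, hn₀M, hn₀⟩ := htriv
    -- m : least positive element of M
    set T : Set ℕ := {k | 0 < k ∧ k ∈ M} with hT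
    have hTne : T.Nonempty := ⟨n₀, Nat.pos_of_ne_zero hn₀, hn₀M⟩
    set m : ℕ := sInf T with hmdef
    have hmT : m ∈ T := Nat.sInf_mem hTne
    have hm : 0 < m := hmT.1
    have hmM : m ∈ M := hmT.2
    have hmle : ∀ k ∈ T, m ≤ k := fun k hk => Nat.sInf_le hk
    -- residue classes
    set S : ℕ → Set ℕ := fun r => {k | 0 < k ∧ k ∈ M ∧ k % m = r} with hS
    set g : Fin m → ℕ := fun r => if h : (S r.val).Nonempty then sInf (S r.val) else m
      with hgdef
    have hgpos : ∀ r, 0 < g r := by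
      intro r
      by_cases h : (S r.val).Nonempty
      · simpa [hgdef, h] using (Nat.sInf_mem h).1
      · simpa [hgdef, h] using hm
    have hgM : ∀ r, g r ∈ M := by
      intro r
      by_cases h : (S r.val).Nonempty
      · simpa [hgdef, h] using (Nat.sInf_mem h).2.1
      · simpa [hgdef, h] using hmM
    have hg0 : g ⟨0, hm⟩ = m := by
      have hmem : m ∈ S 0 := ⟨hm, hmM, Nat.mod_self m⟩
      have hne : (S (0 : ℕ)).Nonempty := ⟨m, hmem⟩
      have h1 : sInf (S 0) ≤ m := Nat.sInf_le hmem
      have h2 : m ≤ sInf (S 0) := hmle _ ⟨(Nat.sInf_mem hne).1, (Nat.sInf_mem hne).2.1⟩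
      simp only [hgdef]
      rw [dif_pos hne]
      omega
    -- every nonzero element of M is a ℕ-combination of the g r
    have hdecomp : ∀ n ∈ M, n ≠ 0 → ∃ c : Fin m → ℕ, n = ∑ r, c r * g r := by
      intro n hnM hn
      obtain ⟨r, hr⟩ : ∃ r : Fin m, (r : ℕ) = n % m := ⟨⟨n % m, Nat.mod_lt n hm⟩, rfl⟩
      have hnS : n ∈ S r.val := ⟨Nat.pos_of_ne_zero hn, hnM, hr.symm⟩
      have hne : (S r.val).Nonempty := ⟨n, hnS⟩
      have hgr : g r = sInf (S r.val) := by simp [hgdef, hne]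
      have hgrS : g r ∈ S r.val := hgr ▸ Nat.sInf_mem hne
      have hle : g r ≤ n := hgr ▸ Nat.sInf_le hnS
      have hmod : g r % m = n % m := hgrS.2.2.trans hr
      have hdvd : m ∣ n - g r := by
        exact Nat.dvd_of_mod_eq_zero (Nat.sub_mod_eq_zero_of_mod_eq hmod.symm)
      obtain ⟨k, hk⟩ := hdvd
      refine ⟨fun s => (if s = r then 1 else 0) + (if s = ⟨0, hm⟩ then k else 0), ?_⟩
      have hsum : ∑ s : Fin m, ((if s = r then 1 else 0) + (if s = ⟨0, hm⟩ then k else 0)) * g s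
          = g r + k * g ⟨0, hm⟩ := by
        simp [add_mul, Finset.sum_add_distrib, ite_mul, Finset.sum_ite_eq']
      calc n = g r + m * k := by omega
        _ = g r + k * g ⟨0, hm⟩ := by rw [hg0, Nat.mul_comm]
        _ = _ := hsum.symm
    refine ⟨starGraph m g hgpos, none, ?_⟩
    ext n
    constructor
    · rintro ⟨f, h1, h2⟩
      rw [starGraph_lap_none] at h1
      have hnn : ∀ r : Fin m, 0 ≤ f (some r) - f none := by
        intro r
        have := h2 (some r) (by simp)
        rw [starGraph_lap_some] at this
        have hgr : (0 : ℤ) < (g r : ℤ) := by exact_mod_cast hgpos r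
        nlinarith
      have hsum : (n : ℤ) = ∑ r : Fin m, (g r : ℤ) * (f (some r) - f none) := by
        have : ∑ r : Fin m, (g r : ℤ) * (f none - f (some r))
            = -∑ r : Fin m, (g r : ℤ) * (f (some r) - f none) := by
          rw [← Finset.sum_neg_distrib]
          exact Finset.sum_congr rfl fun r _ => by ring
        rw [this] at h1
        omega
      set e : Fin m → ℕ := fun r => (f (some r) - f none).toNat with hedef
      have hcast : (n : ℤ) = ((∑ r : Fin m, g r * e r : ℕ) : ℤ) := by
        rw [hsum]
        push_cast
        exact Finset.sum_congr rfl fun r _ => by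
          rw [hedef]; rw [Int.toNat_of_nonneg (hnn r)]
      have hn : n = ∑ r : Fin m, g r * e r := by exact_mod_cast hcast
      rw [hn]
      exact AddSubmonoid.sum_mem M fun r _ => by
        rw [mul_comm, ← smul_eq_mul]
        exact AddSubmonoid.nsmul_mem M (hgM r) (e r)
    · intro hn
      by_cases h0 : n = 0
      · refine ⟨0, ?_, fun Q hQ => ?_⟩
        · rw [starGraph_lap_none]; simp [h0]
        · cases Q with
          | none => exact absurd rfl hQ
          | some r => rw [starGraph_lap_some]; simp
      · obtain ⟨c, hc⟩ := hdecomp n hn h0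
        refine ⟨fun v => Option.elim v 0 (fun r => (c r : ℤ)), ?_, fun Q hQ => ?_⟩
        · rw [starGraph_lap_none]
          have h1 : ∑ r : Fin m, (g r : ℤ) * ((Option.elim none 0 (fun r => (c r : ℤ))) -
              (Option.elim (some r) 0 (fun r => (c r : ℤ))))
              = -((∑ r : Fin m, c r * g r : ℕ) : ℤ) := by
            push_cast
            rw [← Finset.sum_neg_distrib]
            exact Finset.sum_congr rfl fun r _ => by simp; ring
          rw [h1, ← hc]
        · cases Q with
          | none => exact absurd rfl hQ
          | some r =>
            rw [starGraph_lap_some]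
            simp only [Option.elim_some, Option.elim_none, sub_zero]
            positivity
end

section
/- For every numerical semigroup S there exists a simple graph G and a vertex P ∈ V(G) such that the functional Weierstrass set of G at P equals S, i.e., H_f(P) = S. -/
open scoped Classical

-- ============ auxiliary development ============

namespace HfRealize

/-- Vertex type: a center `none`, and for each `a ∈ A` a block with
`σ` extra "A-side" vertices and `a` "B-side" vertices. -/
def Vt (σ : ℕ) (A : Finset ℕ) : Type :=
  Option (Σ a : {x // x ∈ A}, (Fin σ ⊕ Fin a.1))

instance (σ : ℕ) (A : Finset ℕ) : Fintype (Vt σ A) := by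
  unfold Vt; infer_instance

instance (σ : ℕ) (A : Finset ℕ) : DecidableEq (Vt σ A) := by
  unfold Vt; infer_instance

instance (σ : ℕ) (A : Finset ℕ) : Nonempty (Vt σ A) := ⟨none⟩

variable {σ : ℕ} {A : Finset ℕ}

/-- A-side vertex `i` of block `a`. -/
def vA (a : {x // x ∈ A}) (i : Fin σ) : Vt σ A := some ⟨a, Sum.inl i⟩
/-- B-side vertex `j` of block `a`. -/
def vB (a : {x // x ∈ A}) (j : Fin a.1) : Vt σ A := some ⟨a, Sum.inr j⟩

def adjF (σ : ℕ) (A : Finset ℕ) : Vt σ A → Vt σ A → ℕ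
  | none, none => 0
  | none, some ⟨_, w⟩ => if w.isRight then 1 else 0
  | some ⟨_, w⟩, none => if w.isRight then 1 else 0
  | some ⟨a, w⟩, some ⟨b, w'⟩ =>
      if (a : ℕ) = (b : ℕ) ∧ ((w.isLeft ∧ w'.isRight) ∨ (w.isRight ∧ w'.isLeft))
      then 1 else 0

lemma adjF_symm (σ : ℕ) (A : Finset ℕ) (u v : Vt σ A) :
    adjF σ A u v = adjF σ A v u := by
  rcases u with _ | ⟨a, w⟩ <;> rcases v with _ | ⟨b, w'⟩ <;> simp only [adjF] <;>
    try rfl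
  exact if_congr (by tauto) rfl rfl

lemma adjF_loopless (σ : ℕ) (A : Finset ℕ) (v : Vt σ A) : adjF σ A v v = 0 := by
  rcases v with _ | ⟨a, w⟩ <;> simp only [adjF]
  rcases w with i | j <;> simp

lemma adjF_le_one (σ : ℕ) (A : Finset ℕ) (u v : Vt σ A) : adjF σ A u v ≤ 1 := by
  rcases u with _ | ⟨a, w⟩ <;> rcases v with _ | ⟨b, w'⟩ <;> simp only [adjF] <;>
    first | omega | (split_ifs <;> omega)

lemma adjF_conn (σ : ℕ) (A : Finset ℕ) (hA1 : ∀ a ∈ A, 1 ≤ a) (u v : Vt σ A) :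
    Relation.ReflTransGen (fun a b => adjF σ A a b ≠ 0) u v := by
  have key : ∀ w : Vt σ A,
      Relation.ReflTransGen (fun a b => adjF σ A a b ≠ 0) none w := by
    intro w
    rcases w with _ | ⟨a, w⟩
    · exact Relation.ReflTransGen.refl
    · have hj : 0 < a.1 := hA1 a.1 a.2
      rcases w with i | j
      · refine Relation.ReflTransGen.head (b := vB a ⟨0, hj⟩) ?_ ?_
        · simp [adjF, vB]
        · exact Relation.ReflTransGen.single (by simp [adjF, vB, vA])
      · exact Relation.ReflTransGen.single (by simp [adjF])
  have hsymm : Symmetric (fun a b : Vt σ A => adjF σ A a b ≠ 0) := by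
    intro a b h; rw [adjF_symm]; exact h
  exact Relation.ReflTransGen.trans
    ((@Relation.ReflTransGen.stdSymm _ _ ⟨fun x y h => hsymm h⟩).symm _ _ (key u)) (key v)

/-- The glued graph. -/
def Gr (σ : ℕ) (A : Finset ℕ) (hA1 : ∀ a ∈ A, 1 ≤ a) : Multigraph where
  V := Vt σ A
  adj := adjF σ A
  adj_symm := adjF_symm σ A
  adj_loopless := adjF_loopless σ A
  conn := adjF_conn σ A hA1

variable (hA1 : ∀ a ∈ A, 1 ≤ a)

lemma sum_Vt (g : Vt σ A → ℤ) :
    ∑ v : Vt σ A, g v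
      = g none + ∑ a : {x // x ∈ A},
          ((∑ i : Fin σ, g (vA a i)) + ∑ j : Fin a.1, g (vB a j)) := by
  rw [show (∑ v : Vt σ A, g v) = ∑ v : Option (Σ a : {x // x ∈ A}, (Fin σ ⊕ Fin a.1)), g v from rfl]
  erw [Fintype.sum_option]
  congr 1
  rw [← Finset.univ_sigma_univ, Finset.sum_sigma]
  exact Finset.sum_congr rfl fun a _ => by
    rw [Fintype.sum_sum_type]; rfl

lemma lap_none (f : Vt σ A → ℤ) :
    (Gr σ A hA1).lap f none
      = ∑ a : {x // x ∈ A}, ∑ j : Fin a.1, (f none - f (vB a j)) := by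
  show (∑ w : Vt σ A, (adjF σ A none w : ℤ) * (f none - f w)) = _
  rw [sum_Vt (fun w => (adjF σ A none w : ℤ) * (f none - f w))]
  simp [adjF, vA, vB]

lemma lap_vA (f : Vt σ A → ℤ) (a : {x // x ∈ A}) (i : Fin σ) :
    (Gr σ A hA1).lap f (vA a i)
      = ∑ j : Fin a.1, (f (vA a i) - f (vB a j)) := by
  show (∑ w : Vt σ A, (adjF σ A (vA a i) w : ℤ) * (f (vA a i) - f w)) = _
  rw [sum_Vt (fun w => (adjF σ A (vA a i) w : ℤ) * (f (vA a i) - f w))]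
  have h1 : (adjF σ A (vA a i) none : ℤ) = 0 := by simp [adjF, vA]
  have h2 : ∀ (b : {x // x ∈ A}) (i' : Fin σ),
      (adjF σ A (vA a i) (vA b i') : ℤ) = 0 := by
    intro b i'; simp [adjF, vA]
  have h3 : ∀ (b : {x // x ∈ A}) (j : Fin b.1),
      (adjF σ A (vA a i) (vB b j) : ℤ) = if (a:ℕ) = (b:ℕ) then 1 else 0 := by
    intro b j; simp [adjF, vA, vB]
  have key : ∀ b : {x // x ∈ A},
      ((∑ i' : Fin σ, (adjF σ A (vA a i) (vA b i') : ℤ) * (f (vA a i) - f (vA b i')))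
        + ∑ j : Fin b.1, (adjF σ A (vA a i) (vB b j) : ℤ) * (f (vA a i) - f (vB b j)))
      = if (a:ℕ) = (b:ℕ) then ∑ j : Fin b.1, (f (vA a i) - f (vB b j)) else 0 := by
    intro b
    by_cases hab : (a:ℕ) = (b:ℕ) <;> simp [h2, h3, hab]
  rw [h1, zero_mul, zero_add, Finset.sum_congr rfl fun b _ => key b,
    Finset.sum_eq_single a (fun b _ hb => if_neg (fun h => hb (Subtype.ext h.symm)))
      (fun h => absurd (Finset.mem_univ a) h), if_pos rfl]

lemma lap_vB (f : Vt σ A → ℤ) (a : {x // x ∈ A}) (j : Fin a.1) :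
    (Gr σ A hA1).lap f (vB a j)
      = (f (vB a j) - f none) + ∑ i : Fin σ, (f (vB a j) - f (vA a i)) := by
  show (∑ w : Vt σ A, (adjF σ A (vB a j) w : ℤ) * (f (vB a j) - f w)) = _
  rw [sum_Vt (fun w => (adjF σ A (vB a j) w : ℤ) * (f (vB a j) - f w))]
  have h1 : (adjF σ A (vB a j) none : ℤ) = 1 := by simp [adjF, vB]
  have h2 : ∀ (b : {x // x ∈ A}) (i : Fin σ),
      (adjF σ A (vB a j) (vA b i) : ℤ) = if (a:ℕ) = (b:ℕ) then 1 else 0 := by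
    intro b i; simp [adjF, vA, vB]
  have h3 : ∀ (b : {x // x ∈ A}) (j' : Fin b.1),
      (adjF σ A (vB a j) (vB b j') : ℤ) = 0 := by
    intro b j'; simp [adjF, vB]
  have key : ∀ b : {x // x ∈ A},
      ((∑ i : Fin σ, (adjF σ A (vB a j) (vA b i) : ℤ) * (f (vB a j) - f (vA b i)))
        + ∑ j' : Fin b.1, (adjF σ A (vB a j) (vB b j') : ℤ) * (f (vB a j) - f (vB b j')))
      = if (a:ℕ) = (b:ℕ) then ∑ i : Fin σ, (f (vB a j) - f (vA a i)) else 0 := by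
    intro b
    by_cases hab : (a:ℕ) = (b:ℕ)
    · have : b = a := Subtype.ext hab.symm
      subst this
      simp [h2, h3]
    · simp [h2, h3, hab]
  rw [h1, one_mul, Finset.sum_congr rfl fun b _ => key b,
    Finset.sum_eq_single a (fun b _ hb => if_neg (fun h => hb (Subtype.ext h.symm)))
      (fun h => absurd (Finset.mem_univ a) h), if_pos rfl]

end HfRealize

namespace HfRealize

lemma sum_const_fin (n : ℕ) (c : ℤ) : (∑ _j : Fin n, c) = (n : ℤ) * c := by
  simp [Finset.sum_const, Finset.card_univ, mul_comm]

/-- Core arithmetic lemma about one complete bipartite block `K_{σ+1, a}`. -/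
lemma core (σ a : ℕ) (α : Fin σ → ℤ) (β : Fin a → ℤ)
    (H1 : ∀ i, (∑ j, β j) ≤ (a : ℤ) * α i)
    (H2 : ∀ j, (∑ i, α i) ≤ ((σ : ℤ) + 1) * β j) :
    0 ≤ (∑ j, β j) ∧ ((∑ j, β j) < (σ : ℤ) * (a : ℤ) → (a : ℤ) ∣ ∑ j, β j) := by
  set T := ∑ j, β j with hTdef
  set Sa := ∑ i, α i with hSadef
  have e1 : (σ : ℤ) * T ≤ (a : ℤ) * Sa := by
    calc (σ : ℤ) * T = ∑ _i : Fin σ, T := (sum_const_fin σ T).symm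
      _ ≤ ∑ i, (a : ℤ) * α i := Finset.sum_le_sum fun i _ => H1 i
      _ = (a : ℤ) * Sa := by rw [hSadef, Finset.mul_sum]
  have e2 : (a : ℤ) * Sa ≤ ((σ : ℤ) + 1) * T := by
    calc (a : ℤ) * Sa = ∑ _j : Fin a, Sa := (sum_const_fin a Sa).symm
      _ ≤ ∑ j, ((σ : ℤ) + 1) * β j := Finset.sum_le_sum fun j _ => H2 j
      _ = ((σ : ℤ) + 1) * T := by rw [hTdef, Finset.mul_sum]
  have hT0 : 0 ≤ T := by linarith
  refine ⟨hT0, fun hlt => ?_⟩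
  rcases Nat.eq_zero_or_pos a with ha0 | hapos
  · subst ha0
    have : T = 0 := by simp [hTdef]
    simp [this]
  by_contra hdvd
  have ha : (0 : ℤ) < (a : ℤ) := by exact_mod_cast hapos
  set q := T / (a : ℤ) with hq
  set r := T % (a : ℤ) with hr
  have hqr : T = (a : ℤ) * q + r := by
    rw [hq, hr]; exact (Int.mul_ediv_add_emod T (a : ℤ)).symm
  have hr0 : 0 < r := by
    rcases lt_or_eq_of_le (Int.emod_nonneg T (ne_of_gt ha)) with h | h
    · exact h
    · exact absurd (Int.dvd_of_emod_eq_zero h.symm) hdvd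
  have hra : r < (a : ℤ) := Int.emod_lt_of_pos T ha
  have hq0 : 0 ≤ q := Int.ediv_nonneg hT0 (le_of_lt ha)
  have hqσ : q + 1 ≤ (σ : ℤ) := by
    by_contra h
    push_neg at h
    have hσq : (σ : ℤ) ≤ q := by linarith
    have : (σ : ℤ) * (a : ℤ) ≤ q * (a : ℤ) :=
      mul_le_mul_of_nonneg_right hσq (le_of_lt ha)
    nlinarith
  have hα : ∀ i, q + 1 ≤ α i := by
    intro i
    have h := H1 i
    have : (a : ℤ) * q < (a : ℤ) * α i := by linarith
    have := lt_of_mul_lt_mul_left this (le_of_lt ha)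
    linarith
  have hSa' : (σ : ℤ) * (q + 1) ≤ Sa := by
    calc (σ : ℤ) * (q + 1) = ∑ _i : Fin σ, (q + 1) := (sum_const_fin σ (q + 1)).symm
      _ ≤ ∑ i, α i := Finset.sum_le_sum fun i _ => hα i
  have hβ : ∀ j, q + 1 ≤ β j := by
    intro j
    have h := H2 j
    have h' : ((σ : ℤ) + 1) * q < ((σ : ℤ) + 1) * β j := by nlinarith
    have := lt_of_mul_lt_mul_left h' (by positivity)
    linarith
  have hfin : (a : ℤ) * (q + 1) ≤ T := by
    calc (a : ℤ) * (q + 1) = ∑ _j : Fin a, (q + 1) := (sum_const_fin a (q + 1)).symm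
      _ ≤ ∑ j, β j := Finset.sum_le_sum fun j _ => hβ j
  nlinarith

lemma lap_add (G : Multigraph) (f g : G.V → ℤ) (v : G.V) :
    G.lap (f + g) v = G.lap f v + G.lap g v := by
  unfold Multigraph.lap
  rw [← Finset.sum_add_distrib]
  refine Finset.sum_congr rfl fun w _ => ?_
  simp only [Pi.add_apply]; ring

lemma lap_zero (G : Multigraph) (v : G.V) : G.lap 0 v = 0 := by
  unfold Multigraph.lap; simp

lemma lap_shift (G : Multigraph) (f : G.V → ℤ) (c : ℤ) (v : G.V) :
    G.lap (fun w => f w - c) v = G.lap f v := by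
  unfold Multigraph.lap
  refine Finset.sum_congr rfl fun w _ => ?_
  ring

end HfRealize

namespace HfRealize

lemma Hf_zero_mem (G : Multigraph) (P : G.V) : 0 ∈ G.Hf P :=
  ⟨0, by rw [lap_zero]; norm_num, fun Q _ => by rw [lap_zero]⟩

lemma Hf_add_mem (G : Multigraph) (P : G.V) {m n : ℕ}
    (hm : m ∈ G.Hf P) (hn : n ∈ G.Hf P) : m + n ∈ G.Hf P := by
  obtain ⟨f, hf1, hf2⟩ := hm
  obtain ⟨g, hg1, hg2⟩ := hn
  refine ⟨f + g, ?_, fun Q hQ => ?_⟩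
  · rw [lap_add, hf1, hg1]; push_cast; ring
  · rw [lap_add]; exact add_nonneg (hf2 Q hQ) (hg2 Q hQ)

variable {σ : ℕ} {A : Finset ℕ}

lemma gen_mem (hA1 : ∀ a ∈ A, 1 ≤ a) (a₀ : ℕ) (ha₀ : a₀ ∈ A) :
    a₀ ∈ (Gr σ A hA1).Hf none := by
  classical
  set f : Vt σ A → ℤ :=
    fun v => Option.casesOn v (-1) (fun s => if (s.1 : ℕ) = a₀ then 0 else -1) with hf
  have hfnone : f none = -1 := rfl
  have hfA : ∀ (b : {x // x ∈ A}) (i : Fin σ),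
      f (vA b i) = if (b : ℕ) = a₀ then 0 else -1 := fun b i => rfl
  have hfB : ∀ (b : {x // x ∈ A}) (j : Fin b.1),
      f (vB b j) = if (b : ℕ) = a₀ then 0 else -1 := fun b j => rfl
  refine ⟨f, ?_, ?_⟩
  · rw [lap_none hA1]
    have hterm : ∀ b : {x // x ∈ A}, (∑ j : Fin b.1, (f none - f (vB b j)))
        = if (b : ℕ) = a₀ then -((b : ℕ) : ℤ) else 0 := by
      intro b
      by_cases hb : (b : ℕ) = a₀
      · have : ∀ j : Fin b.1, f none - f (vB b j) = -1 := by
          intro j; rw [hfnone, hfB, if_pos hb]; ring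
        rw [Finset.sum_congr rfl fun j _ => this j, sum_const_fin, if_pos hb]; ring
      · have : ∀ j : Fin b.1, f none - f (vB b j) = 0 := by
          intro j; rw [hfnone, hfB, if_neg hb]; ring
        rw [Finset.sum_congr rfl fun j _ => this j, Finset.sum_const_zero, if_neg hb]
    rw [Finset.sum_congr rfl fun b _ => hterm b,
      Finset.sum_eq_single (⟨a₀, ha₀⟩ : {x // x ∈ A})
        (fun b _ hb => if_neg (fun h => hb (Subtype.ext h)))
        (fun h => absurd (Finset.mem_univ _) h)]
    simp
  · intro Q hQ
    rcases Q with _ | ⟨b, w⟩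
    · exact absurd rfl hQ
    rcases w with i | j
    · rw [show (some ⟨b, Sum.inl i⟩ : Vt σ A) = vA b i from rfl, lap_vA hA1]
      have : ∀ j : Fin b.1, f (vA b i) - f (vB b j) = 0 := by
        intro j; rw [hfA, hfB]; ring
      rw [Finset.sum_congr rfl fun j _ => this j, Finset.sum_const_zero]
    · rw [show (some ⟨b, Sum.inr j⟩ : Vt σ A) = vB b j from rfl, lap_vB hA1]
      have h2 : ∀ i : Fin σ, f (vB b j) - f (vA b i) = 0 := by
        intro i; rw [hfA, hfB]; ring
      rw [Finset.sum_congr rfl fun i _ => h2 i, Finset.sum_const_zero, add_zero,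
        hfnone, hfB]
      by_cases hb : (b : ℕ) = a₀ <;> simp [hb]

lemma Hf_sub (hA1 : ∀ a ∈ A, 1 ≤ a) (S : AddSubmonoid ℕ)
    (hAS : ∀ a ∈ A, a ∈ S) (hσS : ∀ m : ℕ, σ ≤ m → m ∈ S)
    (n : ℕ) (hn : n ∈ (Gr σ A hA1).Hf none) : n ∈ S := by
  classical
  obtain ⟨f₀, hfP, hfQ⟩ := hn
  set f : (Gr σ A hA1).V → ℤ := fun v => f₀ v - f₀ none with hfdef
  have hfP' : (Gr σ A hA1).lap f none = -(n : ℤ) := by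
    rw [hfdef]; exact (lap_shift (Gr σ A hA1) f₀ (f₀ none) none).trans hfP
  have hfQ' : ∀ Q, Q ≠ none → 0 ≤ (Gr σ A hA1).lap f Q := by
    intro Q hQ; rw [hfdef]; exact le_of_le_of_eq (hfQ Q hQ) (lap_shift (Gr σ A hA1) f₀ (f₀ none) Q).symm
  have hf0 : f none = 0 := by simp [hfdef]
  -- per-block data
  set T : {x // x ∈ A} → ℤ := fun a => ∑ j : Fin a.1, f (vB a j) with hTdef
  have hcore : ∀ a : {x // x ∈ A},
      0 ≤ T a ∧ (T a < (σ : ℤ) * ((a : ℕ) : ℤ) → ((a : ℕ) : ℤ) ∣ T a) := by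
    intro a
    refine core σ (a : ℕ) (fun i => f (vA a i)) (fun j => f (vB a j)) ?_ ?_
    · intro i
      have h := hfQ' (vA a i) (by simp [vA])
      erw [lap_vA hA1] at h
      have : (∑ j : Fin a.1, (f (vA a i) - f (vB a j)))
          = ((a : ℕ) : ℤ) * f (vA a i) - ∑ j : Fin a.1, f (vB a j) := by
        rw [Finset.sum_sub_distrib, sum_const_fin]
      rw [this] at h
      linarith
    · intro j
      have h := hfQ' (vB a j) (by simp [vB])
      erw [lap_vB hA1] at h
      have : (∑ i : Fin σ, (f (vB a j) - f (vA a i)))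
          = (σ : ℤ) * f (vB a j) - ∑ i : Fin σ, f (vA a i) := by
        rw [Finset.sum_sub_distrib, sum_const_fin]
      rw [this, hf0] at h
      linarith
  have hTmem : ∀ a : {x // x ∈ A}, (T a).toNat ∈ S := by
    intro a
    have ha1 : 1 ≤ (a : ℕ) := hA1 (a : ℕ) a.2
    have hT0 : 0 ≤ T a := (hcore a).1
    by_cases hlt : T a < (σ : ℤ) * ((a : ℕ) : ℤ)
    · obtain ⟨k, hk⟩ := (hcore a).2 hlt
      have hk0 : 0 ≤ k := by
        rcases le_or_gt 0 k with h | h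
        · exact h
        · exfalso; nlinarith [hk, hT0, (by exact_mod_cast ha1 : (1:ℤ) ≤ ((a : ℕ) : ℤ))]
      have heq : (T a).toNat = k.toNat * (a : ℕ) := by
        have : ((T a).toNat : ℤ) = ((k.toNat * (a : ℕ) : ℕ) : ℤ) := by
          rw [Int.toNat_of_nonneg hT0]
          push_cast
          rw [Int.toNat_of_nonneg hk0, hk]
          ring
        exact_mod_cast this
      rw [heq]
      have := AddSubmonoid.nsmul_mem S (hAS (a : ℕ) a.2) k.toNat
      rwa [smul_eq_mul] at this
    · push_neg at hlt
      apply hσS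
      have hσa : (σ : ℤ) ≤ (σ : ℤ) * ((a : ℕ) : ℤ) := by
        nlinarith [(by exact_mod_cast ha1 : (1:ℤ) ≤ ((a : ℕ) : ℤ)), (by positivity : (0:ℤ) ≤ (σ:ℤ))]
      have : (σ : ℤ) ≤ T a := le_trans hσa hlt
      omega
  -- n is the sum of the T a
  have hsum : (n : ℤ) = ∑ a : {x // x ∈ A}, T a := by
    have h := hfP'
    erw [lap_none hA1] at h
    have : (∑ a : {x // x ∈ A}, ∑ j : Fin a.1, (f none - f (vB a j)))
        = -∑ a : {x // x ∈ A}, T a := by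
      rw [← Finset.sum_neg_distrib]
      refine Finset.sum_congr rfl fun a _ => ?_
      rw [hTdef, ← Finset.sum_neg_distrib]
      refine Finset.sum_congr rfl fun j _ => by rw [hf0]; ring
    rw [this] at h
    linarith
  have hsum' : n = ∑ a : {x // x ∈ A}, (T a).toNat := by
    have : (n : ℤ) = ((∑ a : {x // x ∈ A}, (T a).toNat : ℕ) : ℤ) := by
      rw [hsum]
      push_cast
      exact Finset.sum_congr rfl fun a _ => (Int.toNat_of_nonneg ((hcore a).1)).symm
    exact_mod_cast this
  rw [hsum']
  exact AddSubmonoid.sum_mem S fun a _ => hTmem a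

end HfRealize

/-- Every numerical semigroup (cofinite additive submonoid of `ℕ`) is the
functional Weierstrass set of some simple graph at some vertex. -/
theorem Hf_realizes_numericalSemigroup (S : AddSubmonoid ℕ)
    (hS : ((S : Set ℕ)ᶜ).Finite) :
    ∃ (G : Multigraph) (P : G.V), G.Simple ∧ G.Hf P = (S : Set ℕ) := by
  classical
  obtain ⟨B, hB⟩ := hS.bddAbove
  set σ := max (B + 1) 1 with hσdef
  have hσ1 : 1 ≤ σ := le_max_right _ _
  have hBσ : B + 1 ≤ σ := le_max_left _ _
  have hσS : ∀ m : ℕ, σ ≤ m → m ∈ S := by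
    intro m hm
    by_contra h
    have hmem : m ∈ ((S : Set ℕ)ᶜ) := h
    have := hB hmem
    omega
  set A := (Finset.Icc 1 (2 * σ)).filter (fun a => a ∈ S) with hAdef
  have hA1 : ∀ a ∈ A, 1 ≤ a := fun a ha =>
    (Finset.mem_Icc.1 (Finset.mem_filter.1 ha).1).1
  have hAS : ∀ a ∈ A, a ∈ S := fun a ha => (Finset.mem_filter.1 ha).2
  have hσA : σ ∈ A :=
    Finset.mem_filter.2 ⟨Finset.mem_Icc.2 ⟨hσ1, by omega⟩, hσS σ le_rfl⟩
  refine ⟨HfRealize.Gr σ A hA1, none, ⟨fun u v => HfRealize.adjF_le_one σ A u v, ?_⟩, ?_⟩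
  · have : Nontrivial (HfRealize.Vt σ A) :=
      ⟨⟨none, some ⟨⟨σ, hσA⟩, Sum.inr ⟨0, hσ1⟩⟩, by intro h; cases h⟩⟩
    exact Fintype.one_lt_card_iff_nontrivial.mpr this
  · ext n
    constructor
    · intro hn
      exact HfRealize.Hf_sub hA1 S hAS hσS n hn
    · intro hn
      have hn' : n ∈ S := hn
      clear hn
      induction n using Nat.strong_induction_on with
      | _ n ih =>
        rcases Nat.eq_zero_or_pos n with h0 | hpos
        · subst h0; exact HfRealize.Hf_zero_mem _ _
        by_cases hle : n ≤ 2 * σ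
        · exact HfRealize.gen_mem hA1 n
            (Finset.mem_filter.2 ⟨Finset.mem_Icc.2 ⟨hpos, hle⟩, hn'⟩)
        · push_neg at hle
          have h1 : σ ∈ (HfRealize.Gr σ A hA1).Hf none := HfRealize.gen_mem hA1 σ hσA
          have h2 : (n - σ) ∈ (HfRealize.Gr σ A hA1).Hf none := by
            apply ih (n - σ) (by omega)
            apply hσS; omega
          have := HfRealize.Hf_add_mem _ _ h1 h2
          rwa [Nat.add_sub_cancel' (by omega : σ ≤ n)] at this
end

section
/- Let G be a simple graph, fix a vertex P ∈ V(G), and let G_1, …, G_m be the connected components of the graph G − P obtained from G by removing P and its incident edges. For i = 1, …, m let deg_{G_i} P be the number of edges of G joining P to a vertex of G_i. Then the multiplicity of the numerical semigroup H_f(P) (the least positive element of H_f(P)) equals min{ deg_{G_i} P : 1 ≤ i ≤ m }. -/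
open scoped Classical

section Aux
variable (G : Multigraph) (P : G.V)

private lemma sum_antisymm (A : Finset G.V) (g : G.V → G.V → ℤ)
    (hg : ∀ a b, g a b = - g b a) :
    ∑ a ∈ A, ∑ b ∈ A, g a b = 0 := by
  have h : ∑ a ∈ A, ∑ b ∈ A, g a b = ∑ a ∈ A, ∑ b ∈ A, - g a b := by
    conv_lhs => rw [Finset.sum_comm]
    exact Finset.sum_congr rfl fun a _ => Finset.sum_congr rfl fun b _ => hg b a
  have h2 : ∑ a ∈ A, ∑ b ∈ A, - g a b = - ∑ a ∈ A, ∑ b ∈ A, g a b := by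
    simp [Finset.sum_neg_distrib]
  omega

private lemma rel_ne {v w : G.V} (hv : v ≠ P)
    (h : Relation.ReflTransGen (fun a b => a ≠ P ∧ b ≠ P ∧ G.adj a b ≠ 0) v w) : w ≠ P := by
  induction h with
  | refl => exact hv
  | tail _ step _ => exact step.2.1

private lemma rel_symm {v w : G.V}
    (h : Relation.ReflTransGen (fun a b => a ≠ P ∧ b ≠ P ∧ G.adj a b ≠ 0) v w) :
    Relation.ReflTransGen (fun a b => a ≠ P ∧ b ≠ P ∧ G.adj a b ≠ 0) w v :=
  (@Relation.ReflTransGen.stdSymm _ _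
    ⟨fun a b hab => ⟨hab.2.1, hab.1, by rw [G.adj_symm]; exact hab.2.2⟩⟩).symm _ _ h

/-- From any `v ≠ P` there is a vertex in `v`'s component of `G - P` adjacent to `P`. -/
private lemma exists_nbr {v : G.V} (hv : v ≠ P) :
    ∃ w, Relation.ReflTransGen (fun a b => a ≠ P ∧ b ≠ P ∧ G.adj a b ≠ 0) v w ∧
      G.adj P w ≠ 0 := by
  have key : ∀ u : G.V, Relation.ReflTransGen (fun a b => G.adj a b ≠ 0) u P →
      Relation.ReflTransGen (fun a b => a ≠ P ∧ b ≠ P ∧ G.adj a b ≠ 0) v u →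
      ∃ w, Relation.ReflTransGen (fun a b => a ≠ P ∧ b ≠ P ∧ G.adj a b ≠ 0) v w ∧
        G.adj P w ≠ 0 := by
    intro u hu
    induction hu using Relation.ReflTransGen.head_induction_on with
    | refl => intro hvP; exact absurd rfl (rel_ne G P hv hvP)
    | @head a c step hwalk ih =>
      intro hva
      by_cases hc : c = P
      · subst hc
        exact ⟨a, hva, by rw [G.adj_symm]; exact step⟩
      · exact ih (hva.tail ⟨rel_ne G P hv hva, hc, step⟩)
  exact key v (G.conn v P) Relation.ReflTransGen.refl

end Aux

section Mem
variable (G : Multigraph) (P : G.V)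

private lemma mem_Hf_comp {v : G.V} (hv : v ≠ P) :
    (∑ w ∈ Finset.univ.filter
        (fun w => Relation.ReflTransGen (fun a b => a ≠ P ∧ b ≠ P ∧ G.adj a b ≠ 0) v w),
      G.adj P w) ∈ G.Hf P ∧
    0 < ∑ w ∈ Finset.univ.filter
        (fun w => Relation.ReflTransGen (fun a b => a ≠ P ∧ b ≠ P ∧ G.adj a b ≠ 0) v w),
      G.adj P w := by
  set R := fun a b : G.V => Relation.ReflTransGen (fun a b => a ≠ P ∧ b ≠ P ∧ G.adj a b ≠ 0) a b
    with hR
  set A : Finset G.V := Finset.univ.filter (fun w => R v w) with hA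
  set d : ℕ := ∑ w ∈ A, G.adj P w with hd
  set f : G.V → ℤ := fun u => if R v u then 1 else 0 with hf
  have hfP : f P = 0 := by
    simp only [hf, if_neg (fun h : R v P => (rel_ne G P hv h) rfl)]
  have hf01 : ∀ u, f u = 0 ∨ f u = 1 := by
    intro u; by_cases h : R v u <;> simp [hf, h]
  constructor
  · refine ⟨f, ?_, ?_⟩
    · -- lap f P = -d
      have : G.lap f P = - ∑ w, (G.adj P w : ℤ) * f w := by
        simp only [Multigraph.lap, hfP, zero_sub, mul_neg, Finset.sum_neg_distrib]
      rw [this]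
      congr 1
      rw [hd, Nat.cast_sum, hA, Finset.sum_filter]
      refine Finset.sum_congr rfl fun w _ => ?_
      by_cases h : R v w <;> simp [hf, h]
    · intro Q hQ
      by_cases hQA : R v Q
      · -- f Q = 1, each term nonneg
        have hfQ1 : f Q = 1 := by simp [hf, hQA]
        refine Finset.sum_nonneg fun w _ => ?_
        rcases hf01 w with h | h <;>
          · rw [hfQ1, h]; positivity
      · have hfQ0 : f Q = 0 := by simp [hf, hQA]
        have : G.lap f Q = 0 := by
          refine Finset.sum_eq_zero fun w _ => ?_
          rcases hf01 w with h | h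
          · rw [hfQ0, h]; ring
          · -- R v w, so adj Q w = 0
            have hw : R v w := by by_contra hc; simp [hf, hc] at h
            have hadj : G.adj Q w = 0 := by
              by_contra hc
              exact hQA (hw.tail ⟨rel_ne G P hv hw, hQ, by rw [G.adj_symm]; exact hc⟩)
            rw [hadj]; simp
        rw [this]
  · obtain ⟨w, hw, hwadj⟩ := exists_nbr G P hv
    have hwA : w ∈ A := by
      rw [hA, Finset.mem_filter]; exact ⟨Finset.mem_univ _, hw⟩
    have : G.adj P w ≤ d := Finset.single_le_sum (fun i _ => Nat.zero_le _) hwA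
    omega

end Mem

section Low
variable (G : Multigraph) (P : G.V)

private lemma hf_lower {x : ℕ} (hx : x ∈ G.Hf P) (hxpos : 0 < x) :
    ∃ v : G.V, v ≠ P ∧
      (∑ w ∈ Finset.univ.filter
          (fun w => Relation.ReflTransGen (fun a b => a ≠ P ∧ b ≠ P ∧ G.adj a b ≠ 0) v w),
        G.adj P w) ≤ x := by
  obtain ⟨f, hfP, hfQ⟩ := hx
  -- P attains the minimum of f
  have nb : ∀ a c : G.V, a ≠ P → (∀ u, f a ≤ f u) → G.adj a c ≠ 0 → f c = f a := by
    intro a c ha hamin hadj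
    have hterms : ∀ w ∈ Finset.univ, (G.adj a w : ℤ) * (f a - f w) ≤ 0 := fun w _ =>
      mul_nonpos_of_nonneg_of_nonpos (by positivity) (by linarith [hamin w])
    have hsum0 : G.lap f a = 0 :=
      le_antisymm (Finset.sum_nonpos hterms) (hfQ a ha)
    have hall := (Finset.sum_eq_zero_iff_of_nonpos hterms).mp hsum0 c (Finset.mem_univ c)
    rcases mul_eq_zero.mp hall with h | h
    · exact absurd (Nat.cast_eq_zero.mp h) hadj
    · linarith
  have hmin : ∀ u, f P ≤ f u := by
    obtain ⟨Q₀, _, hQ₀⟩ := Finset.exists_min_image Finset.univ f ⟨P, Finset.mem_univ P⟩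
    have hQ₀min : ∀ u, f Q₀ ≤ f u := fun u => hQ₀ u (Finset.mem_univ u)
    have key : ∀ u : G.V, Relation.ReflTransGen (fun a b => G.adj a b ≠ 0) u P →
        (∀ w, f u ≤ f w) → ∀ w, f P ≤ f w := by
      intro u hu
      induction hu using Relation.ReflTransGen.head_induction_on with
      | refl => exact id
      | @head a c step hwalk ih =>
        intro hamin
        by_cases ha : a = P
        · subst ha; exact hamin
        · have hc : f c = f a := nb a c ha hamin step
          exact ih (fun w => hc ▸ hamin w)
    exact key Q₀ (G.conn Q₀ P) hQ₀min
  -- components of the minimum level set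
  have hB : ∀ a b : G.V,
      Relation.ReflTransGen (fun a b => a ≠ P ∧ b ≠ P ∧ G.adj a b ≠ 0) a b →
      f a = f P → f b = f P := by
    intro a b h
    induction h with
    | refl => exact id
    | tail _ step ih =>
      intro hfa
      have h1 := ih hfa
      rename_i b' c' _
      have := nb b' c' step.1 (fun u => h1 ▸ hmin u) step.2.2
      rw [this, h1]
  -- f is not constant
  have hne : ∃ v : G.V, f v ≠ f P := by
    by_contra hc
    push_neg at hc
    have : G.lap f P = 0 := Finset.sum_eq_zero fun w _ => by rw [hc w]; ring
    rw [hfP] at this; omega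
  obtain ⟨v, hvne⟩ := hne
  have hvP : v ≠ P := fun h => hvne (by rw [h])
  refine ⟨v, hvP, ?_⟩
  set R := fun a b : G.V => Relation.ReflTransGen (fun a b => a ≠ P ∧ b ≠ P ∧ G.adj a b ≠ 0) a b
    with hR
  set A : Finset G.V := Finset.univ.filter (fun w => R v w) with hA
  -- every vertex in A has f ≥ f P + 1
  have hAgt : ∀ w ∈ A, f P + 1 ≤ f w := by
    intro w hw
    rw [hA, Finset.mem_filter] at hw
    by_contra hc
    have hfw : f w = f P := le_antisymm (by linarith) (hmin w)
    exact hvne (hB w v (rel_symm G P hw.2) hfw)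
  have hPA : P ∉ A := by
    rw [hA, Finset.mem_filter]
    rintro ⟨-, h⟩
    exact rel_ne G P hvP h rfl
  -- total sum of laplacian is zero
  set g : G.V → G.V → ℤ := fun a b => (G.adj a b : ℤ) * (f a - f b) with hg
  have hganti : ∀ a b, g a b = - g b a := by
    intro a b; rw [hg]; simp only; rw [G.adj_symm]; ring
  have htotal : ∑ Q, G.lap f Q = 0 := sum_antisymm G Finset.univ g hganti
  have herase : ∑ Q ∈ Finset.univ.erase P, G.lap f Q = (x : ℤ) := by
    have := Finset.sum_erase_add Finset.univ (G.lap f) (Finset.mem_univ P)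
    rw [htotal, hfP] at this
    linarith
  have hAsub : A ⊆ Finset.univ.erase P := by
    intro w hw
    rw [hA, Finset.mem_filter] at hw
    exact Finset.mem_erase.mpr ⟨rel_ne G P hvP hw.2, Finset.mem_univ w⟩
  have hsum1 : ∑ Q ∈ A, G.lap f Q ≤ (x : ℤ) := by
    rw [← herase]
    exact Finset.sum_le_sum_of_subset_of_nonneg hAsub
      (fun Q hQ _ => hfQ Q (Finset.ne_of_mem_erase hQ))
  -- lower estimate of the component sum
  have hsplit : ∑ Q ∈ A, G.lap f Q = ∑ Q ∈ A, g Q P := by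
    have e1 : ∀ Q ∈ A, G.lap f Q = ∑ w ∈ A, g Q w + ∑ w ∈ Aᶜ, g Q w := fun Q _ =>
      (Finset.sum_add_sum_compl A (g Q)).symm
    rw [Finset.sum_congr rfl e1, Finset.sum_add_distrib,
      sum_antisymm G A g hganti, zero_add]
    refine Finset.sum_congr rfl fun Q hQ => ?_
    refine Finset.sum_eq_single_of_mem P (Finset.mem_compl.mpr hPA) fun w hw hwP => ?_
    -- w ∉ A, w ≠ P : adj Q w = 0
    rw [hA, Finset.mem_compl, Finset.mem_filter] at hw
    push_neg at hw
    have hQA : R v Q := by rw [hA, Finset.mem_filter] at hQ; exact hQ.2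
    have hadj : G.adj Q w = 0 := by
      by_contra hc
      exact hw (Finset.mem_univ w) (hQA.tail ⟨rel_ne G P hvP hQA, hwP, hc⟩)
    rw [hg]; simp [hadj]
  have hsum2 : ((∑ w ∈ A, G.adj P w : ℕ) : ℤ) ≤ ∑ Q ∈ A, G.lap f Q := by
    rw [hsplit, Nat.cast_sum]
    refine Finset.sum_le_sum fun Q hQ => ?_
    have h1 : (1 : ℤ) ≤ f Q - f P := by linarith [hAgt Q hQ]
    calc ((G.adj P Q : ℕ) : ℤ) = (G.adj Q P : ℤ) * 1 := by rw [G.adj_symm]; ring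
      _ ≤ (G.adj Q P : ℤ) * (f Q - f P) := by
          exact mul_le_mul_of_nonneg_left h1 (by positivity)
      _ = g Q P := rfl
  have : ((∑ w ∈ A, G.adj P w : ℕ) : ℤ) ≤ (x : ℤ) := le_trans hsum2 hsum1
  exact_mod_cast this

end Low

/-- The multiplicity of the functional Weierstrass set of a simple graph at `P`
is the minimum, over the connected components of `G - P`, of the number of edges
joining `P` to that component. -/
theorem multiplicity_Hf (G : Multigraph) (hG : G.Simple) (P : G.V) :
    sInf {x : ℕ | x ∈ G.Hf P ∧ 0 < x} =
      sInf {d : ℕ | ∃ v : G.V, v ≠ P ∧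
        d = ∑ w ∈ Finset.univ.filter
              (fun w => Relation.ReflTransGen
                (fun a b => a ≠ P ∧ b ≠ P ∧ G.adj a b ≠ 0) v w),
            G.adj P w} := by
  have hTS : {d : ℕ | ∃ v : G.V, v ≠ P ∧
        d = ∑ w ∈ Finset.univ.filter
              (fun w => Relation.ReflTransGen
                (fun a b => a ≠ P ∧ b ≠ P ∧ G.adj a b ≠ 0) v w),
            G.adj P w} ⊆ {x : ℕ | x ∈ G.Hf P ∧ 0 < x} := by
    rintro d ⟨v, hv, rfl⟩
    exact mem_Hf_comp G P hv
  have hTne : Set.Nonempty {d : ℕ | ∃ v : G.V, v ≠ P ∧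
        d = ∑ w ∈ Finset.univ.filter
              (fun w => Relation.ReflTransGen
                (fun a b => a ≠ P ∧ b ≠ P ∧ G.adj a b ≠ 0) v w),
            G.adj P w} := by
    obtain ⟨v, hv⟩ := Fintype.exists_ne_of_one_lt_card hG.2 P
    exact ⟨_, v, hv, rfl⟩
  have hSne : Set.Nonempty {x : ℕ | x ∈ G.Hf P ∧ 0 < x} := hTne.mono hTS
  apply le_antisymm
  · exact Nat.sInf_le (hTS (Nat.sInf_mem hTne))
  · obtain ⟨hmem, hpos⟩ := Nat.sInf_mem hSne
    obtain ⟨v, hv, hle⟩ := hf_lower G P hmem hpos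
    exact le_trans (Nat.sInf_le ⟨v, hv, rfl⟩) hle
end

section
/- Let G_1 and G_2 be graphs, let P_1 ∈ V(G_1) and P_2 ∈ V(G_2), let G be the vertex gluing of G_1 and G_2 at P_1 and P_2, and let P ∈ V(G) be the identified vertex. For every k ∈ ℕ, λ_P^G(k) = max{ λ_{P_1}^{G_1}(k_1) + λ_{P_2}^{G_2}(k_2) : k_1, k_2 ∈ ℕ, k_1 + k_2 = k }, where λ_Q(k) = min{ n ∈ ℕ : r(nQ) = k }. -/
open scoped Classical

namespace Multigraph

variable {G : Multigraph}

lemma lap_zero : G.lap 0 = 0 := by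
  funext v; simp [lap]

lemma lap_add_s14 (f g : G.V → ℤ) : G.lap (f + g) = G.lap f + G.lap g := by
  funext v
  simp only [lap, Pi.add_apply, ← Finset.sum_add_distrib]
  exact Finset.sum_congr rfl fun w _ => by ring

lemma effective_linNonempty {D : G.V → ℤ} (hD : G.Effective D) : G.LinNonempty D :=
  ⟨0, by simpa [lap_zero] using hD⟩

lemma linNonempty_add {D D' : G.V → ℤ} (h : G.LinNonempty D) (h' : G.LinNonempty D') :
    G.LinNonempty (D + D') := by
  obtain ⟨f, hf⟩ := h; obtain ⟨g, hg⟩ := h'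
  refine ⟨f + g, fun v => ?_⟩
  have := add_nonneg (hf v) (hg v)
  simpa [lap_add_s14, sub_eq_add_neg, add_comm, add_left_comm, add_assoc] using this

lemma linNonempty_mono {D D' : G.V → ℤ} (h : G.LinNonempty D) (hle : ∀ v, D v ≤ D' v) :
    G.LinNonempty D' := by
  obtain ⟨f, hf⟩ := h
  exact ⟨f, fun v => le_trans (hf v) (by simpa using sub_le_sub_right (hle v) (G.lap f v))⟩

lemma deg_lap (f : G.V → ℤ) : G.deg (G.lap f) = 0 := by
  unfold deg lap
  have key : ∀ v w : G.V, (G.adj v w : ℤ) * (f v - f w)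
      = (G.adj v w : ℤ) * f v - (G.adj w v : ℤ) * f w := by
    intro v w; rw [G.adj_symm w v]; ring
  simp_rw [key, Finset.sum_sub_distrib]
  rw [Finset.sum_comm (f := fun v w => (G.adj w v : ℤ) * f w)]
  simp

lemma deg_sub (D E : G.V → ℤ) : G.deg (D - E) = G.deg D - G.deg E := by
  simp [deg, Finset.sum_sub_distrib]

lemma deg_add (D E : G.V → ℤ) : G.deg (D + E) = G.deg D + G.deg E := by
  simp [deg, Finset.sum_add_distrib]

lemma deg_nonneg_of_effective {D : G.V → ℤ} (h : G.Effective D) : 0 ≤ G.deg D :=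
  Finset.sum_nonneg fun v _ => h v

lemma deg_nonneg_of_linNonempty {D : G.V → ℤ} (h : G.LinNonempty D) : 0 ≤ G.deg D := by
  obtain ⟨f, hf⟩ := h
  have := deg_nonneg_of_effective hf
  rwa [deg_sub, deg_lap, sub_zero] at this

lemma eq_zero_of_effective_deg_zero {D : G.V → ℤ} (h : G.Effective D) (hd : G.deg D = 0) :
    D = 0 := by
  funext v
  have := (Finset.sum_eq_zero_iff_of_nonneg (fun v _ => h v)).1 hd v (Finset.mem_univ v)
  simpa using this

lemma deg_pt (P : G.V) (n : ℤ) : G.deg (G.pt P n) = n := by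
  simp [deg, pt]

lemma pt_add (P : G.V) (m n : ℤ) : G.pt P (m + n) = G.pt P m + G.pt P n := by
  funext v; by_cases h : v = P <;> simp [pt, h]

lemma effective_pt {P : G.V} {n : ℤ} (hn : 0 ≤ n) : G.Effective (G.pt P n) := by
  intro v; by_cases h : v = P <;> simp [pt, h, hn]

/-- `Rge D k` : `|D - E| ≠ ∅` for every effective divisor `E` of degree `k`. -/
def Rge (G : Multigraph) (D : G.V → ℤ) (k : ℕ) : Prop :=
  ∀ E : G.V → ℤ, G.Effective E → G.deg E = (k : ℤ) → G.LinNonempty (D - E)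

lemma rge_zero_iff {D : G.V → ℤ} : G.Rge D 0 ↔ G.LinNonempty D := by
  constructor
  · intro h
    have := h 0 (fun v => le_refl 0) (by simp [deg])
    simpa using this
  · intro h E hE hdE
    have : E = 0 := eq_zero_of_effective_deg_zero hE (by simpa using hdE)
    simpa [this] using h

lemma rge_anti {D : G.V → ℤ} {j k : ℕ} (h : G.Rge D k) (hjk : j ≤ k) : G.Rge D j := by
  intro E hE hdE
  obtain ⟨v⟩ := G.nonemptyV
  have h' := h (E + G.pt v ((k : ℤ) - j)) (fun w => add_nonneg (hE w)
      (effective_pt (by omega) w)) (by rw [deg_add, deg_pt, hdE]; ring)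
  refine linNonempty_mono h' fun w => ?_
  have : 0 ≤ G.pt v ((k : ℤ) - j) w := effective_pt (by omega) w
  simp only [Pi.sub_apply, Pi.add_apply]
  omega

lemma rge_bddAbove (D : G.V → ℤ) : BddAbove {k : ℕ | G.Rge D k} := by
  refine ⟨(G.deg D).toNat, fun k hk => ?_⟩
  obtain ⟨v⟩ := G.nonemptyV
  have h := hk (G.pt v k) (effective_pt (by positivity)) (deg_pt v k)
  have := deg_nonneg_of_linNonempty h
  rw [deg_sub, deg_pt] at this
  omega

lemma rank_eq_sSup {D : G.V → ℤ} (h : G.LinNonempty D) :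
    G.rank D = ((sSup {k : ℕ | G.Rge D k} : ℕ) : ℤ) := by
  rw [rank, if_pos h]; rfl

lemma rge_iff_le_rank {D : G.V → ℤ} (h : G.LinNonempty D) (k : ℕ) :
    G.Rge D k ↔ (k : ℤ) ≤ G.rank D := by
  rw [rank_eq_sSup h, Int.ofNat_le]
  constructor
  · intro hk; exact le_csSup (rge_bddAbove D) hk
  · intro hk
    have hne : {k : ℕ | G.Rge D k}.Nonempty := ⟨0, rge_zero_iff.2 h⟩
    have := Nat.sSup_mem hne (rge_bddAbove D)
    exact rge_anti this hk

lemma rank_of_not_linNonempty {D : G.V → ℤ} (h : ¬ G.LinNonempty D) : G.rank D = -1 := by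
  rw [rank, if_neg h]

end Multigraph
namespace Multigraph

variable {G : Multigraph}

lemma rge_mono {D D' : G.V → ℤ} {k : ℕ} (hle : ∀ v, D v ≤ D' v) (h : G.Rge D k) :
    G.Rge D' k := fun E hE hdE =>
  linNonempty_mono (h E hE hdE) fun v => by
    have := hle v; simp only [Pi.sub_apply]; omega

lemma pt_mono {P : G.V} {m n : ℤ} (h : m ≤ n) (v : G.V) : G.pt P m v ≤ G.pt P n v := by
  by_cases hv : v = P <;> simp [pt, hv, h]

lemma rge_step_down {P : G.V} {n : ℤ} {k : ℕ}
    (h : G.Rge (G.pt P (n + 1)) (k + 1)) : G.Rge (G.pt P n) k := by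
  intro E hE hdE
  have h' := h (E + G.pt P 1) (fun w => add_nonneg (hE w) (effective_pt one_pos.le w))
    (by rw [deg_add, deg_pt, hdE]; push_cast; ring)
  have heq : G.pt P (n + 1) - (E + G.pt P 1) = G.pt P n - E := by
    funext w; by_cases hw : w = P <;> simp [pt, hw] <;> ring
  rwa [heq] at h'

lemma linNonempty_nsmul {D : G.V → ℤ} (h : G.LinNonempty D) (c : ℕ) :
    G.LinNonempty (fun v => (c : ℤ) * D v) := by
  induction c with
  | zero => exact effective_linNonempty (by intro v; simp)
  | succ c ih =>
      have h2 := linNonempty_add ih h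
      have heq : ((fun v => (c : ℤ) * D v) + D) = fun v => ((c + 1 : ℕ) : ℤ) * D v := by
        funext v; simp only [Pi.add_apply]; push_cast; ring
      rwa [heq] at h2

lemma lap_pt_one (b w : G.V) :
    G.lap (G.pt b 1) w = if w = b then (∑ x, (G.adj b x : ℤ)) else -(G.adj w b : ℤ) := by
  have key : ∀ x ∈ Finset.univ, (G.adj w x : ℤ) * (G.pt b 1 w - G.pt b 1 x)
      = (G.adj w x : ℤ) * G.pt b 1 w - (if x = b then (G.adj w x : ℤ) else 0) := by
    intro x _
    by_cases hx : x = b <;> by_cases hw : w = b <;> simp [pt, hx, hw]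
  unfold lap
  rw [Finset.sum_congr rfl key, Finset.sum_sub_distrib,
    Finset.sum_ite_eq' Finset.univ b (fun x => (G.adj w x : ℤ))]
  by_cases hw : w = b
  · simp [pt, hw, G.adj_loopless]
  · simp [pt, hw]

lemma exists_reach (P v : G.V) : ∃ m : ℕ, G.LinNonempty (G.pt P m - G.pt v 1) := by
  induction G.conn P v with
  | refl =>
      refine ⟨1, effective_linNonempty fun w => ?_⟩
      simp
  | @tail b c hPb hbc ih =>
      obtain ⟨m, f, hf⟩ := ih
      set d : ℕ := ∑ x, G.adj b x with hd
      have hdc : d ≠ 0 := by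
        intro hcon
        exact hbc ((Finset.sum_eq_zero_iff).1 hcon c (Finset.mem_univ c))
      have hbc' : b ≠ c := fun hbceq => hbc (hbceq ▸ G.adj_loopless b)
      have hadjcb : 1 ≤ G.adj c b := by
        rw [G.adj_symm c b]; exact Nat.one_le_iff_ne_zero.2 hbc
      have hsum : (∑ x, (G.adj b x : ℤ)) = (d : ℤ) := by rw [hd]; push_cast; rfl
      -- the correction divisor is effective
      have hC : G.Effective (G.pt b 1 + G.pt b ((d : ℤ) - 1) - G.pt c 1 - G.lap (G.pt b 1)) := by
        intro w
        simp only [Pi.add_apply, Pi.sub_apply, lap_pt_one, hsum, pt]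
        split_ifs with h1 h2 h2
        · exact absurd (h1.symm.trans h2) hbc'
        · omega
        · have h3 : (1 : ℤ) ≤ (G.adj w b : ℤ) := by
            rw [h2]; exact_mod_cast hadjcb
          omega
        · have h3 : (0 : ℤ) ≤ (G.adj w b : ℤ) := Int.natCast_nonneg _
          omega
      -- step A
      have stepA : G.LinNonempty (G.pt P m + G.pt b ((d : ℤ) - 1) - G.pt c 1) := by
        refine ⟨f + G.pt b 1, fun w => ?_⟩
        have h1 := hf w
        have h2 := hC w
        simp only [Pi.add_apply, Pi.sub_apply, lap_add_s14] at h1 h2 ⊢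
        linarith
      -- step B
      have stepB : G.LinNonempty (G.pt P ((m : ℤ) * ((d : ℤ) - 1)) - G.pt b ((d : ℤ) - 1)) := by
        have h2 := linNonempty_nsmul ⟨f, hf⟩ (d - 1)
        have hcast : ((d - 1 : ℕ) : ℤ) = (d : ℤ) - 1 := by omega
        have heq : (fun v => ((d - 1 : ℕ) : ℤ) * (G.pt P (m : ℤ) - G.pt b 1) v)
            = G.pt P ((m : ℤ) * ((d : ℤ) - 1)) - G.pt b ((d : ℤ) - 1) := by
          funext w
          simp only [Pi.sub_apply, pt, hcast]
          split_ifs <;> ring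
        rwa [heq] at h2
      refine ⟨m * d, ?_⟩
      have hsumAB := linNonempty_add stepA stepB
      have heq : (G.pt P (m : ℤ) + G.pt b ((d : ℤ) - 1) - G.pt c 1)
          + (G.pt P ((m : ℤ) * ((d : ℤ) - 1)) - G.pt b ((d : ℤ) - 1))
          = G.pt P ((m * d : ℕ) : ℤ) - G.pt c 1 := by
        funext w
        simp only [Pi.add_apply, Pi.sub_apply, pt]
        split_ifs <;> push_cast <;> ring
      rwa [heq] at hsumAB

lemma exists_reach_all (P : G.V) : ∃ M : ℕ, ∀ v, G.LinNonempty (G.pt P M - G.pt v 1) := by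
  choose m hm using exists_reach (G := G) P
  set M : ℕ := Finset.univ.sup m with hM
  refine ⟨M, fun v => ?_⟩
  refine linNonempty_mono (hm v) fun w => ?_
  have hle : ((m v : ℕ) : ℤ) ≤ ((M : ℕ) : ℤ) := by
    exact_mod_cast Finset.le_sup (f := m) (Finset.mem_univ v)
  have := pt_mono (G := G) (P := P) hle w
  simp only [Pi.sub_apply]
  omega

lemma rge_unbounded (P : G.V) (k : ℕ) : ∃ n : ℕ, G.Rge (G.pt P n) k := by
  obtain ⟨M, hM⟩ := exists_reach_all (G := G) P
  refine ⟨M * k, ?_⟩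
  suffices hgen : ∀ (c : ℕ) (E : G.V → ℤ), G.Effective E → G.deg E = (c : ℤ) →
      G.LinNonempty (G.pt P ((M * c : ℕ) : ℤ) - E) by
    intro E hE hdE; exact hgen k E hE hdE
  intro c
  induction c with
  | zero =>
      intro E hE hdE
      have hE0 : E = 0 := eq_zero_of_effective_deg_zero hE (by simpa using hdE)
      subst hE0
      refine effective_linNonempty fun w => ?_
      by_cases hw : w = P <;> simp [pt, hw]
  | succ c ih =>
      intro E hE hdE
      have hex : ∃ v, 1 ≤ E v := by
        by_contra hcon
        push_neg at hcon
        have hE0 : E = 0 := by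
          funext v; have h1 := hE v; have h2 := hcon v; simp; omega
        rw [hE0] at hdE
        simp [deg] at hdE
        omega
      obtain ⟨v, hv⟩ := hex
      have hE' : G.Effective (E - G.pt v 1) := by
        intro w
        by_cases hw : w = v
        · subst hw; simp only [Pi.sub_apply, pt, if_pos rfl]; omega
        · simp only [Pi.sub_apply, pt, if_neg hw]
          have := hE w; omega
      have hdE' : G.deg (E - G.pt v 1) = (c : ℤ) := by
        rw [deg_sub, deg_pt, hdE]; push_cast; ring
      have h1 := ih (E - G.pt v 1) hE' hdE'
      have h2 := hM v
      have hsum := linNonempty_add h1 h2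
      have heq : (G.pt P ((M * c : ℕ) : ℤ) - (E - G.pt v 1)) + (G.pt P (M : ℤ) - G.pt v 1)
          = G.pt P ((M * (c + 1) : ℕ) : ℤ) - E := by
        funext w
        simp only [Pi.add_apply, Pi.sub_apply, pt]
        split_ifs <;> push_cast <;> ring
      rwa [heq] at hsum

lemma rge_pt_zero_false (P : G.V) {k : ℕ} (hk : k ≠ 0) : ¬ G.Rge (G.pt P 0) k := by
  intro h
  obtain ⟨v⟩ := G.nonemptyV
  have h' := h (G.pt v k) (effective_pt (by positivity)) (deg_pt v k)
  have := deg_nonneg_of_linNonempty h'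
  rw [deg_sub, deg_pt, deg_pt] at this
  omega

lemma lam_le_iff (P : G.V) (k n : ℕ) : G.lam P k ≤ n ↔ G.Rge (G.pt P n) k := by
  set S : Set ℕ := {n : ℕ | G.Rge (G.pt P n) k} with hS
  have hSne : S.Nonempty := rge_unbounded P k
  have hup : ∀ {a b : ℕ}, a ≤ b → a ∈ S → b ∈ S := by
    intro a b hab ha
    exact rge_mono (fun v => pt_mono (by exact_mod_cast hab) v) ha
  set N := sInf S with hN
  have hNS : N ∈ S := Nat.sInf_mem hSne
  have hlin : ∀ m : ℕ, G.LinNonempty (G.pt P (m : ℤ)) := fun m =>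
    effective_linNonempty (effective_pt (by positivity))
  have hrank : G.rank (G.pt P (N : ℤ)) = (k : ℤ) := by
    have hge : (k : ℤ) ≤ G.rank (G.pt P (N : ℤ)) := (rge_iff_le_rank (hlin N) k).1 hNS
    have hlt : ¬ G.Rge (G.pt P (N : ℤ)) (k + 1) := by
      rcases Nat.eq_zero_or_pos N with h0 | hpos
      · rw [h0]
        simpa using rge_pt_zero_false (G := G) P (k := k + 1) (by omega)
      · intro hR
        have hcast : ((N : ℕ) : ℤ) = ((N - 1 : ℕ) : ℤ) + 1 := by omega
        rw [hcast] at hR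
        have hmem : (N - 1) ∈ S := rge_step_down hR
        have := Nat.sInf_le hmem
        omega
    have hlt' : ¬ ((k : ℤ) + 1 ≤ G.rank (G.pt P (N : ℤ))) := fun hcon =>
      hlt ((rge_iff_le_rank (hlin N) (k + 1)).2 (by push_cast; omega))
    omega
  have hlam : G.lam P k = N := by
    have hNT : N ∈ {n : ℕ | G.rank (G.pt P (n : ℤ)) = (k : ℤ)} := hrank
    refine le_antisymm (Nat.sInf_le hNT) ?_
    refine le_csInf ⟨N, hNT⟩ fun n hn => ?_
    have hmem : n ∈ S := (rge_iff_le_rank (hlin n) k).2 (le_of_eq hn.symm)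
    exact Nat.sInf_le hmem
  rw [hlam]
  constructor
  · intro hn; exact hup hn hNS
  · intro hn; exact Nat.sInf_le hn

lemma lam_zero (P : G.V) : G.lam P 0 = 0 := by
  have := (lam_le_iff (G := G) P 0 0).2 (rge_zero_iff.2 (effective_linNonempty
    (effective_pt le_rfl)))
  omega

lemma lam_pos (P : G.V) {k : ℕ} (hk : k ≠ 0) : 1 ≤ G.lam P k := by
  by_contra hcon
  have h0 : G.lam P k ≤ 0 := by omega
  have := (lam_le_iff P k 0).1 h0
  exact rge_pt_zero_false P hk (by simpa using this)

end Multigraph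
/-- Bundled data of a vertex gluing. -/
structure GluingData (G G₁ G₂ : Multigraph) (P : G.V) (P₁ : G₁.V) (P₂ : G₂.V) where
  ι₁ : G₁.V → G.V
  ι₂ : G₂.V → G.V
  inj₁ : Function.Injective ι₁
  inj₂ : Function.Injective ι₂
  hP₁ : ι₁ P₁ = P
  hP₂ : ι₂ P₂ = P
  hcap : ∀ a b, ι₁ a = ι₂ b → ι₁ a = P
  hcov : ∀ v : G.V, (∃ a, ι₁ a = v) ∨ (∃ b, ι₂ b = v)
  hadj₁ : ∀ a b, G.adj (ι₁ a) (ι₁ b) = G₁.adj a b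
  hadj₂ : ∀ a b, G.adj (ι₂ a) (ι₂ b) = G₂.adj a b
  hcross : ∀ a b, ι₁ a ≠ P → ι₂ b ≠ P → G.adj (ι₁ a) (ι₂ b) = 0

namespace GluingData

open Multigraph

variable {G G₁ G₂ : Multigraph} {P : G.V} {P₁ : G₁.V} {P₂ : G₂.V}
variable (gd : GluingData G G₁ G₂ P P₁ P₂)

lemma ne₁ {a : G₁.V} (ha : a ≠ P₁) : gd.ι₁ a ≠ P := fun hc =>
  ha (gd.inj₁ (hc.trans gd.hP₁.symm))

lemma ne₂ {b : G₂.V} (hb : b ≠ P₂) : gd.ι₂ b ≠ P := fun hc =>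
  hb (gd.inj₂ (hc.trans gd.hP₂.symm))

lemma sum_decomp (g : G.V → ℤ) :
    ∑ a, g (gd.ι₁ a) + ∑ b, g (gd.ι₂ b) = (∑ v, g v) + g P := by
  have h1 : ∑ a, g (gd.ι₁ a) = ∑ v ∈ Finset.univ.image gd.ι₁, g v :=
    (Finset.sum_image (fun a _ b _ hab => gd.inj₁ hab)).symm
  have h2 : ∑ b, g (gd.ι₂ b) = ∑ v ∈ Finset.univ.image gd.ι₂, g v :=
    (Finset.sum_image (fun a _ b _ hab => gd.inj₂ hab)).symm
  have hu : Finset.univ.image gd.ι₁ ∪ Finset.univ.image gd.ι₂ = Finset.univ := by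
    ext v
    simp only [Finset.mem_union, Finset.mem_image, Finset.mem_univ, true_and, iff_true]
    exact gd.hcov v
  have hi : Finset.univ.image gd.ι₁ ∩ Finset.univ.image gd.ι₂ = {P} := by
    ext v
    simp only [Finset.mem_inter, Finset.mem_image, Finset.mem_univ, true_and,
      Finset.mem_singleton]
    constructor
    · rintro ⟨⟨a, ha⟩, ⟨b, hb⟩⟩
      rw [← ha]
      exact gd.hcap a b (ha.trans hb.symm)
    · rintro rfl
      exact ⟨⟨P₁, gd.hP₁⟩, ⟨P₂, gd.hP₂⟩⟩
  rw [h1, h2, ← Finset.sum_union_inter, hu, hi, Finset.sum_singleton]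

lemma lap_glue₁ (f : G.V → ℤ) (a : G₁.V) (ha : gd.ι₁ a ≠ P) :
    G.lap f (gd.ι₁ a) = G₁.lap (fun x => f (gd.ι₁ x)) a := by
  have hdec := gd.sum_decomp (fun v => (G.adj (gd.ι₁ a) v : ℤ) * (f (gd.ι₁ a) - f v))
  have h1 : ∑ x, (G.adj (gd.ι₁ a) (gd.ι₁ x) : ℤ) * (f (gd.ι₁ a) - f (gd.ι₁ x))
      = G₁.lap (fun x => f (gd.ι₁ x)) a := by
    refine Finset.sum_congr rfl fun x _ => ?_
    rw [gd.hadj₁]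
  have h2 : ∑ b, (G.adj (gd.ι₁ a) (gd.ι₂ b) : ℤ) * (f (gd.ι₁ a) - f (gd.ι₂ b))
      = (G.adj (gd.ι₁ a) P : ℤ) * (f (gd.ι₁ a) - f P) := by
    rw [Finset.sum_eq_single P₂]
    · rw [gd.hP₂]
    · intro b _ hb
      rw [gd.hcross a b ha (gd.ne₂ hb)]
      simp
    · intro hc; exact absurd (Finset.mem_univ P₂) hc
  rw [h1, h2] at hdec
  have hl : G.lap f (gd.ι₁ a) = ∑ v, (G.adj (gd.ι₁ a) v : ℤ) * (f (gd.ι₁ a) - f v) := rfl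
  rw [hl]
  linarith [hdec]

lemma lap_glue₂ (f : G.V → ℤ) (b : G₂.V) (hb : gd.ι₂ b ≠ P) :
    G.lap f (gd.ι₂ b) = G₂.lap (fun x => f (gd.ι₂ x)) b := by
  have hdec := gd.sum_decomp (fun v => (G.adj (gd.ι₂ b) v : ℤ) * (f (gd.ι₂ b) - f v))
  have h1 : ∑ x, (G.adj (gd.ι₂ b) (gd.ι₂ x) : ℤ) * (f (gd.ι₂ b) - f (gd.ι₂ x))
      = G₂.lap (fun x => f (gd.ι₂ x)) b := by
    refine Finset.sum_congr rfl fun x _ => ?_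
    rw [gd.hadj₂]
  have h2 : ∑ a, (G.adj (gd.ι₂ b) (gd.ι₁ a) : ℤ) * (f (gd.ι₂ b) - f (gd.ι₁ a))
      = (G.adj (gd.ι₂ b) P : ℤ) * (f (gd.ι₂ b) - f P) := by
    rw [Finset.sum_eq_single P₁]
    · rw [gd.hP₁]
    · intro a _ ha
      rw [G.adj_symm, gd.hcross a b (gd.ne₁ ha) hb]
      simp
    · intro hc; exact absurd (Finset.mem_univ P₁) hc
  rw [h1, h2] at hdec
  have hl : G.lap f (gd.ι₂ b) = ∑ v, (G.adj (gd.ι₂ b) v : ℤ) * (f (gd.ι₂ b) - f v) := rfl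
  rw [hl]
  linarith [hdec]

lemma lap_glue_P (f : G.V → ℤ) :
    G.lap f P = G₁.lap (fun x => f (gd.ι₁ x)) P₁ + G₂.lap (fun x => f (gd.ι₂ x)) P₂ := by
  have hdec := gd.sum_decomp (fun v => (G.adj P v : ℤ) * (f P - f v))
  have h1 : ∑ x, (G.adj P (gd.ι₁ x) : ℤ) * (f P - f (gd.ι₁ x))
      = G₁.lap (fun x => f (gd.ι₁ x)) P₁ := by
    refine Finset.sum_congr rfl fun x _ => ?_
    have hf : f P = f (gd.ι₁ P₁) := by rw [gd.hP₁]
    have hadj : G.adj P (gd.ι₁ x) = G₁.adj P₁ x := by rw [← gd.hadj₁, gd.hP₁]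
    rw [hf, hadj]
  have h2 : ∑ x, (G.adj P (gd.ι₂ x) : ℤ) * (f P - f (gd.ι₂ x))
      = G₂.lap (fun x => f (gd.ι₂ x)) P₂ := by
    refine Finset.sum_congr rfl fun x _ => ?_
    have hf : f P = f (gd.ι₂ P₂) := by rw [gd.hP₂]
    have hadj : G.adj P (gd.ι₂ x) = G₂.adj P₂ x := by rw [← gd.hadj₂, gd.hP₂]
    rw [hf, hadj]
  have h3 : (G.adj P P : ℤ) * (f P - f P) = 0 := by simp
  rw [h1, h2] at hdec
  have hl : G.lap f P = ∑ v, (G.adj P v : ℤ) * (f P - f v) := rfl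
  rw [hl]
  linarith [hdec, h3]

/-- Gluing two functions on the parts into a function on the whole graph. -/
noncomputable def glue (f₁ : G₁.V → ℤ) (f₂ : G₂.V → ℤ) : G.V → ℤ := fun v =>
  if h : ∃ a, gd.ι₁ a = v then f₁ h.choose
  else f₂ ((gd.hcov v).resolve_left h).choose

lemma glue_comp₁ (f₁ : G₁.V → ℤ) (f₂ : G₂.V → ℤ) (a : G₁.V) :
    gd.glue f₁ f₂ (gd.ι₁ a) = f₁ a := by
  have h : ∃ a', gd.ι₁ a' = gd.ι₁ a := ⟨a, rfl⟩
  rw [glue, dif_pos h]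
  exact congrArg f₁ (gd.inj₁ h.choose_spec)

lemma glue_comp₂ (f₁ : G₁.V → ℤ) (f₂ : G₂.V → ℤ) (hc : f₁ P₁ = f₂ P₂) (b : G₂.V) :
    gd.glue f₁ f₂ (gd.ι₂ b) = f₂ b := by
  by_cases h : ∃ a, gd.ι₁ a = gd.ι₂ b
  · rw [glue, dif_pos h]
    have hP : gd.ι₁ h.choose = P := gd.hcap _ b h.choose_spec
    have hbP : b = P₂ := gd.inj₂ ((h.choose_spec.symm.trans hP).trans gd.hP₂.symm)
    have hch : h.choose = P₁ := gd.inj₁ (hP.trans gd.hP₁.symm)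
    rw [hch, hbP, hc]
  · rw [glue, dif_neg h]
    exact congrArg f₂ (gd.inj₂ ((gd.hcov (gd.ι₂ b)).resolve_left h).choose_spec)

/-- Restriction of a divisor to the first part, with prescribed value at `P₁`. -/
def res₁ (D : G.V → ℤ) (d : ℤ) : G₁.V → ℤ := fun a => if a = P₁ then d else D (gd.ι₁ a)

/-- Restriction of a divisor to the second part, with prescribed value at `P₂`. -/
def res₂ (D : G.V → ℤ) (d : ℤ) : G₂.V → ℤ := fun b => if b = P₂ then d else D (gd.ι₂ b)

end GluingData
namespace Multigraph

variable {G : Multigraph}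

lemma lap_shift (f : G.V → ℤ) (c : ℤ) : G.lap (fun v => f v + c) = G.lap f := by
  funext v
  exact Finset.sum_congr rfl fun w _ => by ring

lemma exists_worst (P : G.V) (k : ℕ) : ∃ E : G.V → ℤ, G.Effective E ∧ G.deg E = (k : ℤ) ∧
    ∀ d : ℤ, G.LinNonempty (G.pt P d - E) → ((G.lam P k : ℕ) : ℤ) ≤ d := by
  rcases Nat.eq_zero_or_pos k with rfl | hk
  · refine ⟨0, fun v => le_rfl, by simp [deg], fun d hd => ?_⟩
    rw [lam_zero]
    have hnn := deg_nonneg_of_linNonempty hd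
    rw [deg_sub, deg_pt] at hnn
    simp only [deg, Pi.zero_apply, Finset.sum_const_zero] at hnn
    simpa using hnn
  · have hpos := lam_pos (G := G) P (k := k) (by omega)
    have hnot : ¬ G.Rge (G.pt P ((G.lam P k - 1 : ℕ) : ℤ)) k := by
      intro hR
      have := (lam_le_iff P k (G.lam P k - 1)).2 hR
      omega
    rw [Rge] at hnot
    push_neg at hnot
    obtain ⟨E, hE, hdE, hnl⟩ := hnot
    refine ⟨E, hE, hdE, fun d hd => ?_⟩
    by_contra hcon
    push_neg at hcon
    apply hnl
    refine linNonempty_mono hd fun v => ?_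
    simp only [Pi.sub_apply]
    have := pt_mono (G := G) (P := P) (m := d) (n := ((G.lam P k - 1 : ℕ) : ℤ)) (by omega) v
    omega

end Multigraph

namespace GluingData

open Multigraph

variable {G G₁ G₂ : Multigraph} {P : G.V} {P₁ : G₁.V} {P₂ : G₂.V}
variable (gd : GluingData G G₁ G₂ P P₁ P₂)

lemma split_iff (D : G.V → ℤ) :
    G.LinNonempty D ↔ ∃ d₁ d₂ : ℤ, d₁ + d₂ = D P ∧
      G₁.LinNonempty (gd.res₁ D d₁) ∧ G₂.LinNonempty (gd.res₂ D d₂) := by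
  constructor
  · rintro ⟨f, hf⟩
    refine ⟨D P - G₂.lap (fun x => f (gd.ι₂ x)) P₂, G₂.lap (fun x => f (gd.ι₂ x)) P₂,
      by ring, ⟨fun x => f (gd.ι₁ x), fun a => ?_⟩, ⟨fun x => f (gd.ι₂ x), fun b => ?_⟩⟩
    · by_cases ha : a = P₁
      · rw [ha]
        have hP := hf P
        have hlapP := gd.lap_glue_P f
        simp only [Pi.sub_apply] at hP
        simp only [Pi.sub_apply, res₁]
        rw [if_true]
        linarith
      · have := hf (gd.ι₁ a)
        have hlap := gd.lap_glue₁ f a (gd.ne₁ ha)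
        simp only [Pi.sub_apply, res₁, if_neg ha] at *
        linarith
    · by_cases hb : b = P₂
      · rw [hb]
        simp only [Pi.sub_apply, res₂]
        rw [if_true]
        simp
      · have := hf (gd.ι₂ b)
        have hlap := gd.lap_glue₂ f b (gd.ne₂ hb)
        simp only [Pi.sub_apply, res₂, if_neg hb] at *
        linarith
  · rintro ⟨d₁, d₂, hd, ⟨f₁, h1⟩, ⟨f₂, h2⟩⟩
    set f₂' : G₂.V → ℤ := fun b => f₂ b + (f₁ P₁ - f₂ P₂) with hf₂'
    have hlap₂' : G₂.lap f₂' = G₂.lap f₂ := by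
      rw [hf₂']; exact lap_shift f₂ (f₁ P₁ - f₂ P₂)
    have hc : f₁ P₁ = f₂' P₂ := by simp [hf₂']
    set F := gd.glue f₁ f₂' with hF
    have hcomp₁ : (fun x => F (gd.ι₁ x)) = f₁ := funext (gd.glue_comp₁ f₁ f₂')
    have hcomp₂ : (fun x => F (gd.ι₂ x)) = f₂' := funext (gd.glue_comp₂ f₁ f₂' hc)
    refine ⟨F, fun v => ?_⟩
    by_cases hvP : v = P
    · subst hvP
      have hlapP := gd.lap_glue_P F
      rw [hcomp₁, hcomp₂, hlap₂'] at hlapP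
      have e1 := h1 P₁
      have e2 := h2 P₂
      simp only [Pi.sub_apply, res₁, res₂] at e1 e2
      rw [if_true] at e1
      rw [if_true] at e2
      simp only [Pi.sub_apply, hlapP]
      linarith
    · rcases gd.hcov v with ⟨a, ha⟩ | ⟨b, hb⟩
      · have haP : a ≠ P₁ := fun hcc => hvP (by rw [← ha, hcc, gd.hP₁])
        have hlap := gd.lap_glue₁ F a (by rw [ha]; exact hvP)
        rw [hcomp₁] at hlap
        have e1 := h1 a
        simp only [Pi.sub_apply, res₁, if_neg haP] at e1
        simp only [Pi.sub_apply]
        rw [← ha, hlap]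
        exact e1
      · have hbP : b ≠ P₂ := fun hcc => hvP (by rw [← hb, hcc, gd.hP₂])
        have hlap := gd.lap_glue₂ F b (by rw [hb]; exact hvP)
        rw [hcomp₂] at hlap
        have e2 := h2 b
        simp only [Pi.sub_apply, res₂, if_neg hbP] at e2
        simp only [Pi.sub_apply]
        rw [← hb, hlap, hlap₂']
        exact e2

lemma deg_res (D : G.V → ℤ) {d₁ d₂ : ℤ} (hd : d₁ + d₂ = D P) :
    G₁.deg (gd.res₁ D d₁) + G₂.deg (gd.res₂ D d₂) = G.deg D := by
  have key₁ : ∀ a ∈ Finset.univ, gd.res₁ D d₁ a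
      = D (gd.ι₁ a) + (if a = P₁ then d₁ - D P else 0) := by
    intro a _
    by_cases ha : a = P₁
    · rw [ha]
      simp only [res₁]
      rw [if_true, if_true, gd.hP₁]
      ring
    · simp [res₁, ha]
  have key₂ : ∀ b ∈ Finset.univ, gd.res₂ D d₂ b
      = D (gd.ι₂ b) + (if b = P₂ then d₂ - D P else 0) := by
    intro b _
    by_cases hb : b = P₂
    · rw [hb]
      simp only [res₂]
      rw [if_true, if_true, gd.hP₂]
      ring
    · simp [res₂, hb]
  have h1 : G₁.deg (gd.res₁ D d₁) = (∑ a, D (gd.ι₁ a)) + (d₁ - D P) := by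
    rw [deg, Finset.sum_congr rfl key₁, Finset.sum_add_distrib,
      Finset.sum_ite_eq' Finset.univ P₁ (fun _ => d₁ - D P)]
    simp
  have h2 : G₂.deg (gd.res₂ D d₂) = (∑ b, D (gd.ι₂ b)) + (d₂ - D P) := by
    rw [deg, Finset.sum_congr rfl key₂, Finset.sum_add_distrib,
      Finset.sum_ite_eq' Finset.univ P₂ (fun _ => d₂ - D P)]
    simp
  have hdec := gd.sum_decomp D
  rw [h1, h2]
  have : G.deg D = ∑ v, D v := rfl
  rw [this]
  linarith

/-- Pushforward of a pair of divisors to the glued graph. -/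
noncomputable def push (E₁ : G₁.V → ℤ) (E₂ : G₂.V → ℤ) : G.V → ℤ := fun v =>
  (if h : ∃ a, gd.ι₁ a = v then E₁ h.choose else 0) +
  (if h : ∃ b, gd.ι₂ b = v then E₂ h.choose else 0)

lemma push_apply₁ (E₁ : G₁.V → ℤ) (E₂ : G₂.V → ℤ) {a : G₁.V} (ha : a ≠ P₁) :
    gd.push E₁ E₂ (gd.ι₁ a) = E₁ a := by
  have h : ∃ a', gd.ι₁ a' = gd.ι₁ a := ⟨a, rfl⟩
  have hno : ¬ ∃ b, gd.ι₂ b = gd.ι₁ a := by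
    rintro ⟨b, hb⟩
    exact gd.ne₁ ha (gd.hcap a b hb.symm)
  have hch : h.choose = a := gd.inj₁ h.choose_spec
  rw [push, dif_pos h, dif_neg hno, hch, add_zero]

lemma push_apply₂ (E₁ : G₁.V → ℤ) (E₂ : G₂.V → ℤ) {b : G₂.V} (hb : b ≠ P₂) :
    gd.push E₁ E₂ (gd.ι₂ b) = E₂ b := by
  have h : ∃ b', gd.ι₂ b' = gd.ι₂ b := ⟨b, rfl⟩
  have hno : ¬ ∃ a, gd.ι₁ a = gd.ι₂ b := by
    rintro ⟨a, ha⟩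
    exact gd.ne₂ hb (ha ▸ gd.hcap a b ha)
  have hch : h.choose = b := gd.inj₂ h.choose_spec
  rw [push, dif_neg hno, dif_pos h, hch, zero_add]

lemma push_P (E₁ : G₁.V → ℤ) (E₂ : G₂.V → ℤ) : gd.push E₁ E₂ P = E₁ P₁ + E₂ P₂ := by
  have h1 : ∃ a, gd.ι₁ a = P := ⟨P₁, gd.hP₁⟩
  have h2 : ∃ b, gd.ι₂ b = P := ⟨P₂, gd.hP₂⟩
  have hch1 : h1.choose = P₁ := gd.inj₁ (h1.choose_spec.trans gd.hP₁.symm)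
  have hch2 : h2.choose = P₂ := gd.inj₂ (h2.choose_spec.trans gd.hP₂.symm)
  rw [push, dif_pos h1, dif_pos h2, hch1, hch2]

lemma push_effective {E₁ : G₁.V → ℤ} {E₂ : G₂.V → ℤ}
    (h1 : G₁.Effective E₁) (h2 : G₂.Effective E₂) : G.Effective (gd.push E₁ E₂) := by
  intro v
  rw [push]
  apply add_nonneg
  · split_ifs with h
    exacts [h1 _, le_rfl]
  · split_ifs with h
    exacts [h2 _, le_rfl]

lemma res₁_push (E₁ : G₁.V → ℤ) (E₂ : G₂.V → ℤ) :
    gd.res₁ (gd.push E₁ E₂) (E₁ P₁) = E₁ := by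
  funext a
  by_cases ha : a = P₁
  · rw [ha]; simp [res₁]
  · simp only [res₁, if_neg ha]
    exact gd.push_apply₁ E₁ E₂ ha

lemma res₂_push (E₁ : G₁.V → ℤ) (E₂ : G₂.V → ℤ) :
    gd.res₂ (gd.push E₁ E₂) (E₂ P₂) = E₂ := by
  funext b
  by_cases hb : b = P₂
  · rw [hb]; simp [res₂]
  · simp only [res₂, if_neg hb]
    exact gd.push_apply₂ E₁ E₂ hb

lemma deg_push (E₁ : G₁.V → ℤ) (E₂ : G₂.V → ℤ) :
    G.deg (gd.push E₁ E₂) = G₁.deg E₁ + G₂.deg E₂ := by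
  have h := gd.deg_res (gd.push E₁ E₂) (d₁ := E₁ P₁) (d₂ := E₂ P₂) (gd.push_P E₁ E₂).symm
  rw [gd.res₁_push, gd.res₂_push] at h
  omega

end GluingData

/-- Under vertex gluing, `λ_P(k)` is the maximum of `λ_{P₁}(k₁) + λ_{P₂}(k₂)`
over `k₁ + k₂ = k`. -/
theorem lam_vertexGluing (G G₁ G₂ : Multigraph) (P : G.V) (P₁ : G₁.V) (P₂ : G₂.V)
    (h : IsVertexGluing G G₁ G₂ P P₁ P₂) (k : ℕ) :
    G.lam P k =
      sSup {x : ℕ | ∃ k₁ k₂ : ℕ, k₁ + k₂ = k ∧ x = G₁.lam P₁ k₁ + G₂.lam P₂ k₂} := by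
  obtain ⟨ι₁, ι₂, inj₁, inj₂, hP₁, hP₂, hcap, hcov, hadj₁, hadj₂, hcross⟩ := h
  have gd : GluingData G G₁ G₂ P P₁ P₂ :=
    ⟨ι₁, ι₂, inj₁, inj₂, hP₁, hP₂, hcap, hcov, hadj₁, hadj₂, hcross⟩
  clear inj₁ inj₂ hP₁ hP₂ hcap hcov hadj₁ hadj₂ hcross
  set T : Set ℕ := {x : ℕ | ∃ k₁ k₂ : ℕ, k₁ + k₂ = k ∧ x = G₁.lam P₁ k₁ + G₂.lam P₂ k₂}
    with hT
  have hTne : T.Nonempty := ⟨G₁.lam P₁ 0 + G₂.lam P₂ k, 0, k, by omega, rfl⟩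
  have hTbdd : BddAbove T := by
    refine ⟨(Finset.range (k + 1)).sup (G₁.lam P₁) + (Finset.range (k + 1)).sup (G₂.lam P₂), ?_⟩
    rintro x ⟨k₁, k₂, hkk, rfl⟩
    exact add_le_add (Finset.le_sup (Finset.mem_range.mpr (by omega)))
      (Finset.le_sup (Finset.mem_range.mpr (by omega)))
  set N := sSup T with hN
  refine le_antisymm ?_ ?_
  · -- `G.lam P k ≤ N`
    rw [Multigraph.lam_le_iff]
    intro E hE hdE
    have hE₁ : G₁.Effective (gd.res₁ E (E P)) := by
      intro a
      simp only [GluingData.res₁]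
      split_ifs
      exacts [hE P, hE _]
    have hE₂ : G₂.Effective (gd.res₂ E 0) := by
      intro b
      simp only [GluingData.res₂]
      split_ifs
      exacts [le_rfl, hE _]
    have hdeg := gd.deg_res E (d₁ := E P) (d₂ := 0) (by ring)
    have hd₁nn := Multigraph.deg_nonneg_of_effective hE₁
    have hd₂nn := Multigraph.deg_nonneg_of_effective hE₂
    set E₁ : G₁.V → ℤ := gd.res₁ E (E P) with hE₁def
    set E₂ : G₂.V → ℤ := gd.res₂ E 0 with hE₂def
    set k₁ := (G₁.deg E₁).toNat with hk₁def
    set k₂ := (G₂.deg E₂).toNat with hk₂def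
    have hk₁ : (k₁ : ℤ) = G₁.deg E₁ := Int.toNat_of_nonneg hd₁nn
    have hk₂ : (k₂ : ℤ) = G₂.deg E₂ := Int.toNat_of_nonneg hd₂nn
    have hkk : k₁ + k₂ = k := by omega
    have hL₁ : G₁.LinNonempty (G₁.pt P₁ ((G₁.lam P₁ k₁ : ℕ) : ℤ) - E₁) :=
      ((Multigraph.lam_le_iff (G := G₁) P₁ k₁ (G₁.lam P₁ k₁)).1 le_rfl) E₁ hE₁ hk₁.symm
    have hL₂ : G₂.LinNonempty (G₂.pt P₂ ((G₂.lam P₂ k₂ : ℕ) : ℤ) - E₂) :=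
      ((Multigraph.lam_le_iff (G := G₂) P₂ k₂ (G₂.lam P₂ k₂)).1 le_rfl) E₂ hE₂ hk₂.symm
    have hLN : G₁.lam P₁ k₁ + G₂.lam P₂ k₂ ≤ N :=
      le_csSup hTbdd ⟨k₁, k₂, hkk, rfl⟩
    refine (gd.split_iff _).2
      ⟨(G₁.lam P₁ k₁ : ℤ) + ((N : ℤ) - ((G₁.lam P₁ k₁ + G₂.lam P₂ k₂ : ℕ) : ℤ)) - E P,
        ((G₂.lam P₂ k₂ : ℕ) : ℤ), ?_, ?_, ?_⟩
    · simp only [Pi.sub_apply, Multigraph.pt, if_pos rfl]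
      push_cast
      ring
    · have heq : gd.res₁ (G.pt P ((N : ℕ) : ℤ) - E)
          ((G₁.lam P₁ k₁ : ℤ) + ((N : ℤ) - ((G₁.lam P₁ k₁ + G₂.lam P₂ k₂ : ℕ) : ℤ)) - E P)
          = (G₁.pt P₁ ((G₁.lam P₁ k₁ : ℕ) : ℤ) - E₁)
            + G₁.pt P₁ ((N : ℤ) - ((G₁.lam P₁ k₁ + G₂.lam P₂ k₂ : ℕ) : ℤ)) := by
        funext a
        by_cases ha : a = P₁
        · rw [ha]
          simp only [GluingData.res₁, Multigraph.pt, Pi.add_apply, Pi.sub_apply, if_true,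
            hE₁def]
          push_cast
          ring
        · simp only [GluingData.res₁, Multigraph.pt, Pi.add_apply, Pi.sub_apply, if_neg ha,
            if_neg (gd.ne₁ ha), hE₁def]
          ring
      rw [heq]
      refine Multigraph.linNonempty_add hL₁ (Multigraph.effective_linNonempty
        (Multigraph.effective_pt ?_))
      have : ((G₁.lam P₁ k₁ + G₂.lam P₂ k₂ : ℕ) : ℤ) ≤ (N : ℤ) := by exact_mod_cast hLN
      omega
    · have heq : gd.res₂ (G.pt P ((N : ℕ) : ℤ) - E) ((G₂.lam P₂ k₂ : ℕ) : ℤ)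
          = G₂.pt P₂ ((G₂.lam P₂ k₂ : ℕ) : ℤ) - E₂ := by
        funext b
        by_cases hb : b = P₂
        · rw [hb]
          simp only [GluingData.res₂, Multigraph.pt, Pi.sub_apply, if_true, hE₂def]
          ring
        · simp only [GluingData.res₂, Multigraph.pt, Pi.sub_apply, if_neg hb,
            if_neg (gd.ne₂ hb), hE₂def]
      rw [heq]
      exact hL₂
  · refine csSup_le hTne ?_
    rintro x ⟨k₁, k₂, hkk, rfl⟩
    obtain ⟨E₁, hE₁, hdE₁, hW₁⟩ := Multigraph.exists_worst (G := G₁) P₁ k₁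
    obtain ⟨E₂, hE₂, hdE₂, hW₂⟩ := Multigraph.exists_worst (G := G₂) P₂ k₂
    set n := G.lam P k with hn
    have hR : G.Rge (G.pt P (n : ℤ)) k := (Multigraph.lam_le_iff P k n).1 le_rfl
    have hlin := hR (gd.push E₁ E₂) (gd.push_effective hE₁ hE₂)
      (by rw [gd.deg_push, hdE₁, hdE₂, ← hkk]; push_cast; ring)
    obtain ⟨d₁, d₂, hd, h1, h2⟩ := (gd.split_iff _).1 hlin
    have heq₁ : gd.res₁ (G.pt P (n : ℤ) - gd.push E₁ E₂) d₁
        = G₁.pt P₁ (d₁ + E₁ P₁) - E₁ := by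
      funext a
      by_cases ha : a = P₁
      · rw [ha]
        simp only [GluingData.res₁, Multigraph.pt, Pi.sub_apply, if_true]
        ring
      · simp only [GluingData.res₁, Multigraph.pt, Pi.sub_apply, if_neg ha,
          if_neg (gd.ne₁ ha)]
        rw [gd.push_apply₁ E₁ E₂ ha]
    have heq₂ : gd.res₂ (G.pt P (n : ℤ) - gd.push E₁ E₂) d₂
        = G₂.pt P₂ (d₂ + E₂ P₂) - E₂ := by
      funext b
      by_cases hb : b = P₂
      · rw [hb]
        simp only [GluingData.res₂, Multigraph.pt, Pi.sub_apply, if_true]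
        ring
      · simp only [GluingData.res₂, Multigraph.pt, Pi.sub_apply, if_neg hb,
          if_neg (gd.ne₂ hb)]
        rw [gd.push_apply₂ E₁ E₂ hb]
    rw [heq₁] at h1
    rw [heq₂] at h2
    have hb₁ := hW₁ (d₁ + E₁ P₁) h1
    have hb₂ := hW₂ (d₂ + E₂ P₂) h2
    have hdP : d₁ + d₂ = (n : ℤ) - (E₁ P₁ + E₂ P₂) := by
      have hptP : G.pt P ((n : ℕ) : ℤ) P = ((n : ℕ) : ℤ) := by simp [Multigraph.pt]
      simp only [Pi.sub_apply, gd.push_P, hptP] at hd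
      omega
    have hfin : ((G₁.lam P₁ k₁ : ℕ) : ℤ) + ((G₂.lam P₂ k₂ : ℕ) : ℤ) ≤ ((n : ℕ) : ℤ) := by
      linarith
    exact_mod_cast hfin
end
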